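/- arXiv:2312.15902 — 4 statements merged into one kernel-verified Lean document; each statement's English description precedes it below -/
import Mathlib

section
/- Let G be a finite simple graph on n vertices. If the number of edges of G exceeds C(n−1, 2) + 1, then G has a Hamiltonian cycle (Ore's edge-count theorem). -/
set_option linter.unusedSectionVars false

open SimpleGraph Finset

namespace OreAux

variable {V : Type*} [Fintype V] [DecidableEq V] {G : SimpleGraph V}

/-- A "path list": a nonempty list of distinct vertices with consecutive adjacency. -/
def PL (G : SimpleGraph V) (l : List V) : Prop :=
  l ≠ [] ∧ l.Chain' G.Adj ∧ l.Nodup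

lemma PL.reverse {l : List V} (h : PL G l) : PL G l.reverse := by
  obtain ⟨h1, h2, h3⟩ := h
  refine ⟨by simpa, ?_, by simpa⟩
  rw [List.Chain', List.isChain_reverse]
  exact h2.imp fun a b hab => hab.symm

/-- There is a maximal path list. -/
lemma exists_maximal_PL (hne : Nonempty V) :
    ∃ l, PL G l ∧ ∀ l', PL G l' → l'.length ≤ l.length := by
  classical
  haveI := hne
  obtain ⟨v⟩ := hne
  set Q : ℕ → Prop := fun m => ∃ l, PL G l ∧ l.length = m with hQ
  have hQ1 : Q 1 := ⟨[v], ⟨by simp, List.isChain_singleton _, by simp⟩, rfl⟩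
  have h1n : 1 ≤ Fintype.card V := Fintype.card_pos
  obtain ⟨l, hl, hlen⟩ := Nat.findGreatest_spec (P := Q) h1n hQ1
  refine ⟨l, hl, fun l' hl' => ?_⟩
  rw [hlen]
  exact Nat.le_findGreatest (hl'.2.2.length_le_card) ⟨l', hl', rfl⟩

/-- For a maximal path list, every neighbor of the head lies in the list. -/
lemma head_neighbors_mem {l : List V} (hl : PL G l)
    (hmax : ∀ l', PL G l' → l'.length ≤ l.length) {x : V}
    (hx : G.Adj (l.head hl.1) x) : x ∈ l := by
  by_contra hxl
  have hpl : PL G (x :: l) := by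
    refine ⟨by simp, ?_, by simp [hl.2.2, hxl]⟩
    rw [List.Chain', List.isChain_cons]
    refine ⟨fun y hy => ?_, hl.2.1⟩
    rw [List.head?_eq_head hl.1] at hy
    cases hy
    exact hx.symm
  have := hmax _ hpl
  simp at this

lemma getLast_neighbors_mem {l : List V} (hl : PL G l)
    (hmax : ∀ l', PL G l' → l'.length ≤ l.length) {x : V}
    (hx : G.Adj (l.getLast hl.1) x) : x ∈ l := by
  have hrev : PL G l.reverse := hl.reverse
  have hmax' : ∀ l', PL G l' → l'.length ≤ l.reverse.length := by
    simpa using hmax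
  have hhead : l.reverse.head hrev.1 = l.getLast hl.1 := by
    rw [List.head_reverse]
  have := head_neighbors_mem hrev hmax' (x := x) (by rw [hhead]; exact hx)
  simpa using this

variable [DecidableRel G.Adj]

lemma degree_le_of_subset {v : V} {s : Finset V} (h : G.neighborFinset v ⊆ s) :
    G.degree v ≤ s.card := by
  rw [← card_neighborFinset_eq_degree]
  exact card_le_card h

/-- Ore's degree condition from the edge count. -/
lemma ore_condition [Fintype G.edgeSet] {n : ℕ} (hn : n = Fintype.card V) (hn3 : 3 ≤ n)
    (h : (n - 1).choose 2 + 1 < G.edgeFinset.card)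
    {u v : V} (huv : u ≠ v) (hadj : ¬G.Adj u v) : n ≤ G.degree u + G.degree v := by
  classical
  set s : Finset V := (univ.erase v).erase u with hs
  have hscard : s.card = n - 2 := by
    rw [hs, card_erase_of_mem (by simp [huv]), card_erase_of_mem (by simp), card_univ, ← hn]
    omega
  set T : Finset (Sym2 V) := s.sym2.filter (fun e => ¬e.IsDiag) with hT
  set D : Finset (Sym2 V) := s.sym2.filter (fun e => e.IsDiag) with hD
  have hDcard : D.card = s.card := by
    have : D = s.image (fun a => s(a, a)) := by
      ext e
      induction e with
      | _ a b =>
        simp only [hD, mem_filter, Finset.mk_mem_sym2_iff, Sym2.isDiag_iff_proj_eq, mem_image]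
        constructor
        · rintro ⟨⟨ha, hb⟩, rfl⟩; exact ⟨a, ha, rfl⟩
        · rintro ⟨c, hc, hcc⟩
          obtain ⟨rfl, rfl⟩ | ⟨rfl, rfl⟩ := Sym2.eq_iff.1 hcc.symm <;> exact ⟨⟨hc, hc⟩, rfl⟩
    rw [this, card_image_of_injective]
    intro a b hab
    simpa using Sym2.eq_iff.1 hab
  have hTD : D.card + T.card = s.sym2.card := by
    rw [hT, hD]
    exact card_filter_add_card_filter_not (p := fun e : Sym2 V => e.IsDiag)
  have hsym2 : s.sym2.card = (n - 1).choose 2 := by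
    rw [Finset.card_sym2, hscard]
    congr 1
    omega
  have hTcard : T.card + (n - 2) = (n - 1).choose 2 := by omega
  set E := G.edgeFinset with hE
  have hsub : E ⊆ E.filter (fun e => u ∈ e) ∪ E.filter (fun e => u ∉ e ∧ v ∈ e) ∪
      E.filter (fun e => u ∉ e ∧ v ∉ e) := by
    intro e he
    simp only [mem_union, mem_filter]
    by_cases h1 : u ∈ e <;> by_cases h2 : v ∈ e <;> tauto
  have hcard := (card_le_card hsub).trans ((card_union_le _ _).trans
    (Nat.add_le_add_right (card_union_le _ _) _))
  have h1 : (E.filter (fun e => u ∈ e)).card = G.degree u := by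
    rw [← incidenceFinset_eq_filter, card_incidenceFinset_eq_degree]
  have h2 : (E.filter (fun e => u ∉ e ∧ v ∈ e)).card ≤ G.degree v := by
    rw [← card_incidenceFinset_eq_degree, incidenceFinset_eq_filter]
    apply card_le_card
    intro e he
    rw [mem_filter] at he ⊢
    exact ⟨he.1, he.2.2⟩
  have h3 : (E.filter (fun e => u ∉ e ∧ v ∉ e)).card ≤ T.card := by
    apply card_le_card
    intro e he
    simp only [mem_filter, hE, mem_edgeFinset] at he
    obtain ⟨heE, hu, hv⟩ := he
    rw [hT, mem_filter, Finset.mem_sym2_iff]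
    refine ⟨fun y hy => ?_, G.not_isDiag_of_mem_edgeSet heE⟩
    rw [hs, mem_erase, mem_erase]
    exact ⟨fun hyu => hu (hyu ▸ hy), fun hyv => hv (hyv ▸ hy), mem_univ y⟩
  omega

/-- From a maximal path list, build a cycle list on the same vertex set. -/
lemma exists_cycle_list [Fintype G.edgeSet] {l : List V} (hl : PL G l)
    (hmax : ∀ l', PL G l' → l'.length ≤ l.length)
    (hdeg : ∀ u v : V, u ≠ v → ¬G.Adj u v → Fintype.card V ≤ G.degree u + G.degree v)
    (hcard3 : 3 ≤ Fintype.card V) :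
    ∃ c : List V, ∃ hc : c ≠ [], c.Chain' G.Adj ∧ c.Nodup ∧ c.toFinset = l.toFinset ∧
      c.length = l.length ∧ G.Adj (c.getLast hc) (c.head hc) := by
  classical
  set len := l.length with hlen
  have hlpos : 0 < len := List.length_pos_iff.2 hl.1
  set a := l.head hl.1 with ha
  set b := l.getLast hl.1 with hb
  have hael : a ∈ l := List.head_mem hl.1
  -- degree bound for a vertex all of whose neighbors are in l, and which is in l
  have degb : ∀ x : V, x ∈ l → (∀ y, G.Adj x y → y ∈ l) → G.degree x ≤ len - 1 := by
    intro x hxl hxn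
    have hsub : G.neighborFinset x ⊆ l.toFinset.erase x := by
      intro y hy
      rw [mem_neighborFinset] at hy
      rw [Finset.mem_erase]
      exact ⟨fun hyx => G.irrefl (hyx ▸ hy), List.mem_toFinset.2 (hxn y hy)⟩
    have := degree_le_of_subset hsub
    rwa [Finset.card_erase_of_mem (List.mem_toFinset.2 hxl),
      List.toFinset_card_of_nodup hl.2.2] at this
  have hna : ∀ y, G.Adj a y → y ∈ l := fun y hy => head_neighbors_mem hl hmax hy
  have hnb : ∀ y, G.Adj b y → y ∈ l := fun y hy => getLast_neighbors_mem hl hmax hy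
  have hlen2 : 2 ≤ len := by
    by_contra hlen2
    have h1 : len = 1 := by omega
    have hab : a = b := by
      rw [ha, hb, List.head_eq_getElem, List.getLast_eq_getElem]
      congr 1
      omega
    obtain ⟨u, hu⟩ := Fintype.exists_ne_of_one_lt_card (by omega) a
    have hadj : ¬G.Adj a u := by
      intro hadj
      have := hna u hadj
      rw [List.mem_iff_getElem] at this
      obtain ⟨j, hj, rfl⟩ := this
      have : j = 0 := by omega
      subst this
      exact hadj.ne (by rw [ha, List.head_eq_getElem])
    have h0 : G.degree a = 0 := by
      have := degb a hael hna
      omega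
    have := hdeg u a hu (fun hadj' => hadj hadj'.symm)
    have := G.degree_lt_card_verts u
    omega
  -- get a cycle list
  have hane : a ≠ b → ¬ G.Adj a b →
      ∃ i : ℕ, ∃ h1 : i + 1 < len, G.Adj a (l[i+1]'h1) ∧ G.Adj b (l[i]'(by omega)) := by
    intro hab hadj
    set A : Finset ℕ := (Finset.range (len - 1)).filter (fun i => G.Adj a (l.getD (i+1) a))
      with hA
    set B : Finset ℕ := (Finset.range (len - 1)).filter (fun i => G.Adj b (l.getD i a)) with hB
    have hAcard : A.card = G.degree a := by
      rw [← card_neighborFinset_eq_degree]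
      refine Finset.card_bij (fun i _ => l.getD (i+1) a) ?_ ?_ ?_
      · intro i hi
        rw [hA, Finset.mem_filter] at hi
        rw [mem_neighborFinset]
        exact hi.2
      · intro i hi j hj hij
        rw [hA, Finset.mem_filter, Finset.mem_range] at hi hj
        rw [List.getD_eq_getElem l a (show i + 1 < l.length by omega),
          List.getD_eq_getElem l a (show j + 1 < l.length by omega)] at hij
        have := (hl.2.2.getElem_inj_iff).1 hij
        omega
      · intro y hy
        rw [mem_neighborFinset] at hy
        have := hna y hy
        rw [List.mem_iff_getElem] at this
        obtain ⟨j, hj, rfl⟩ := this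
        have hj0 : j ≠ 0 := by
          intro h0
          subst h0
          exact hy.ne (by rw [ha, List.head_eq_getElem])
        refine ⟨j - 1, ?_, ?_⟩
        · rw [hA, Finset.mem_filter, Finset.mem_range]
          constructor
          · omega
          · rw [List.getD_eq_getElem l a (show j - 1 + 1 < l.length by omega)]
            have hidx : j - 1 + 1 = j := by omega
            simp only [hidx]
            exact hy
        · show l.getD (j - 1 + 1) a = l[j]
          rw [List.getD_eq_getElem l a (show j - 1 + 1 < l.length by omega)]
          have hidx : j - 1 + 1 = j := by omega
          simp only [hidx]
    have hBcard : B.card = G.degree b := by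
      rw [← card_neighborFinset_eq_degree]
      refine Finset.card_bij (fun i _ => l.getD i a) ?_ ?_ ?_
      · intro i hi
        rw [hB, Finset.mem_filter] at hi
        rw [mem_neighborFinset]
        exact hi.2
      · intro i hi j hj hij
        rw [hB, Finset.mem_filter, Finset.mem_range] at hi hj
        rw [List.getD_eq_getElem l a (show i < l.length by omega),
          List.getD_eq_getElem l a (show j < l.length by omega)] at hij
        exact (hl.2.2.getElem_inj_iff).1 hij
      · intro y hy
        rw [mem_neighborFinset] at hy
        have := hnb y hy
        rw [List.mem_iff_getElem] at this
        obtain ⟨j, hj, rfl⟩ := this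
        have hj0 : j ≠ len - 1 := by
          intro h0
          have : l.getLast hl.1 = l[j] := by
            rw [List.getLast_eq_getElem]
            congr 1
            omega
          exact hy.ne (by rw [hb, this])
        refine ⟨j, ?_, ?_⟩
        · rw [hB, Finset.mem_filter, Finset.mem_range]
          exact ⟨by omega, by rw [List.getD_eq_getElem l a (show j < l.length by omega)]; exact hy⟩
        · show l.getD j a = l[j]
          rw [List.getD_eq_getElem l a (show j < l.length by omega)]
    have hun : (A ∪ B).card ≤ len - 1 := by
      refine (Finset.card_le_card ?_).trans (le_of_eq (Finset.card_range _))
      rw [hA, hB]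
      exact Finset.union_subset (Finset.filter_subset _ _) (Finset.filter_subset _ _)
    have hint : 0 < (A ∩ B).card := by
      have hui := Finset.card_union_add_card_inter A B
      have hd := hdeg a b hab hadj
      have hlencard : len ≤ Fintype.card V := hl.2.2.length_le_card
      omega
    obtain ⟨i, hi⟩ := Finset.card_pos.1 hint
    rw [Finset.mem_inter, hA, hB, Finset.mem_filter, Finset.mem_filter, Finset.mem_range] at hi
    obtain ⟨⟨hiR, hiA⟩, _, hiB⟩ := hi
    refine ⟨i, by omega, ?_, ?_⟩
    · rwa [List.getD_eq_getElem l a (by omega)] at hiA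
    · rwa [List.getD_eq_getElem l a (by omega)] at hiB
  by_cases hab : G.Adj b a
  · exact ⟨l, hl.1, hl.2.1, hl.2.2, rfl, rfl, hab⟩
  · have habne : a ≠ b := by
      rw [ha, hb, List.head_eq_getElem, List.getLast_eq_getElem]
      intro hEq
      have := (hl.2.2.getElem_inj_iff).1 hEq
      omega
    obtain ⟨i, h1, hia, hib⟩ := hane habne (fun h => hab h.symm)
    set c := l.take (i+1) ++ (l.drop (i+1)).reverse with hcdef
    have htake_ne : l.take (i+1) ≠ [] := by
      have : (l.take (i+1)).length = i + 1 := by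
        rw [List.length_take]; omega
      intro h0
      rw [h0] at this
      simp at this
    have hdrop_ne : l.drop (i+1) ≠ [] := by
      intro h0
      have := List.length_drop (i := i+1) (l := l)
      rw [h0] at this
      simp at this
      omega
    have hperm : c.Perm l := by
      have h2 : ((l.drop (i+1)).reverse).Perm (l.drop (i+1)) := List.reverse_perm _
      have h3 := List.Perm.append_left (l.take (i+1)) h2
      rwa [List.take_append_drop] at h3
    have hclen : c.length = len := hperm.length_eq
    have hc : c ≠ [] := by
      intro h0
      rw [h0] at hclen
      simp at hclen
      omega
    have hrev_ne : (l.drop (i+1)).reverse ≠ [] := by simpa using hdrop_ne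
    have hchead : c.head hc = a := by
      show (List.take (i + 1) l ++ (List.drop (i + 1) l).reverse).head hc = a
      rw [List.head_append]
      rw [dif_neg (by simp [List.isEmpty_iff, htake_ne])]
      rw [List.head_eq_getElem, List.getElem_take, ha, List.head_eq_getElem]
    have hclast : c.getLast hc = l[i+1]'(by omega) := by
      show (List.take (i + 1) l ++ (List.drop (i + 1) l).reverse).getLast hc = _
      rw [List.getLast_append]
      rw [dif_neg (by simp [List.isEmpty_iff, hdrop_ne])]
      rw [List.getLast_reverse, List.head_drop]
    refine ⟨c, hc, ?_, hperm.symm.nodup hl.2.2, List.toFinset_eq_of_perm _ _ hperm, hclen, ?_⟩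
    · rw [hcdef, List.Chain', List.isChain_append]
      refine ⟨hl.2.1.infix (List.take_prefix _ _).isInfix, ?_, ?_⟩
      · rw [List.isChain_reverse]
        exact (hl.2.1.infix (List.drop_suffix _ _).isInfix).imp fun x y hxy => hxy.symm
      · intro x hx y hy
        rw [List.getLast?_eq_getLast htake_ne] at hx
        rw [List.head?_eq_head hrev_ne] at hy
        cases hx; cases hy
        have e1 : (l.take (i+1)).getLast htake_ne = l[i]'(by omega) := by
          rw [List.getLast_eq_getElem]
          have hlt : (l.take (i+1)).length - 1 = i := by rw [List.length_take]; omega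
          simp only [hlt]
          rw [List.getElem_take]
        have e2 : ((l.drop (i+1)).reverse).head hrev_ne = b := by
          rw [List.head_reverse, List.getLast_drop]
        rw [e1, e2]
        exact hib.symm
    · rw [hchead, hclast]
      exact hia.symm

/-- The cycle list built on a maximal path covers all vertices. -/
lemma cycle_covers [Fintype G.edgeSet] {l c : List V} (hl : PL G l)
    (hmax : ∀ l', PL G l' → l'.length ≤ l.length)
    (hdeg : ∀ u v : V, u ≠ v → ¬G.Adj u v → Fintype.card V ≤ G.degree u + G.degree v)
    (hc : c ≠ []) (hch : c.Chain' G.Adj) (hnd : c.Nodup) (hfin : c.toFinset = l.toFinset)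
    (hlen : c.length = l.length) (hadj : G.Adj (c.getLast hc) (c.head hc)) :
    c.toFinset = Finset.univ := by
  classical
  by_contra hne
  obtain ⟨w, hw⟩ : ∃ w, w ∉ c.toFinset := by
    by_contra hno
    push_neg at hno
    exact hne (Finset.eq_univ_iff_forall.2 hno)
  have hwc : w ∉ c := fun hmem => hw (List.mem_toFinset.2 hmem)
  set len := l.length with hlendef
  have hlenpos : 0 < len := List.length_pos_iff.2 hl.1
  -- w has a neighbor on c
  have hx : ∃ x ∈ c, G.Adj w x := by
    by_contra hnox
    push_neg at hnox
    set a := l.head hl.1 with ha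
    have hael : a ∈ l := List.head_mem hl.1
    have haec : a ∈ c := by
      rw [← List.mem_toFinset, hfin, List.mem_toFinset]
      exact hael
    have hwa : w ≠ a := fun hEq => hwc (hEq ▸ haec)
    have hadjwa : ¬G.Adj w a := hnox a haec
    have hdega : G.degree a ≤ len - 1 := by
      have hsub : G.neighborFinset a ⊆ l.toFinset.erase a := by
        intro y hy
        rw [mem_neighborFinset] at hy
        rw [Finset.mem_erase]
        exact ⟨fun hyx => G.irrefl (hyx ▸ hy),
          List.mem_toFinset.2 (head_neighbors_mem hl hmax hy)⟩
      have := degree_le_of_subset hsub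
      rwa [Finset.card_erase_of_mem (List.mem_toFinset.2 hael),
        List.toFinset_card_of_nodup hl.2.2] at this
    have hdegw : G.degree w ≤ Fintype.card V - len - 1 := by
      have hsub : G.neighborFinset w ⊆ (Finset.univ \ c.toFinset).erase w := by
        intro y hy
        rw [mem_neighborFinset] at hy
        rw [Finset.mem_erase, Finset.mem_sdiff]
        refine ⟨fun hyx => G.irrefl (hyx ▸ hy), Finset.mem_univ _, fun hyc => ?_⟩
        exact hnox y (List.mem_toFinset.1 hyc) hy
      have h2 := degree_le_of_subset hsub
      have hwmem : w ∈ Finset.univ \ c.toFinset := by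
        rw [Finset.mem_sdiff]
        exact ⟨Finset.mem_univ _, hw⟩
      rw [Finset.card_erase_of_mem hwmem, Finset.card_sdiff_of_subset (Finset.subset_univ _),
        Finset.card_univ, List.toFinset_card_of_nodup hnd, hlen] at h2
      exact h2
    have hdd := hdeg w a hwa hadjwa
    have hlencard : len + 1 ≤ Fintype.card V := by
      have hsub : l.toFinset ⊆ Finset.univ.erase w := by
        intro y hy
        rw [Finset.mem_erase]
        refine ⟨fun hEq => ?_, Finset.mem_univ _⟩
        subst hEq
        rw [← hfin] at hy
        exact hw hy
      have := Finset.card_le_card hsub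
      rw [Finset.card_erase_of_mem (Finset.mem_univ _), Finset.card_univ,
        List.toFinset_card_of_nodup hl.2.2] at this
      omega
    omega
  obtain ⟨x, hxc, hwx⟩ := hx
  obtain ⟨c1, c2, rfl⟩ := List.append_of_mem hxc
  -- the rotated and extended path
  set d := (w :: x :: c2) ++ c1 with hd
  have hsuf : (x :: c2) <:+ (c1 ++ x :: c2) := ⟨c1, rfl⟩
  have hpre : c1 <+: (c1 ++ x :: c2) := ⟨x :: c2, rfl⟩
  have hdPL : PL G d := by
    refine ⟨by simp [hd], ?_, ?_⟩
    · rw [hd, List.Chain', List.isChain_append]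
      refine ⟨?_, hch.infix hpre.isInfix, ?_⟩
      · rw [List.isChain_cons_cons]
        exact ⟨hwx, hch.infix hsuf.isInfix⟩
      · intro p hp q hq
        cases c1 with
        | nil => simp at hq
        | cons z c1' =>
          rw [List.head?_eq_head (by simp)] at hq
          rw [List.getLast?_eq_getLast (by simp)] at hp
          cases hp; cases hq
          have e1 : (w :: x :: c2).getLast (by simp) = ((z :: c1') ++ x :: c2).getLast hc := by
            rw [List.getLast_cons (by simp : x :: c2 ≠ []), List.getLast_append]
            rw [dif_neg (by simp)]
          have e2 : (z :: c1').head (by simp) = ((z :: c1') ++ x :: c2).head hc := by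
            rw [List.head_append]
            rw [dif_neg (by simp)]
          rw [e1, e2]
          exact hadj
    · have hperm : (x :: (c2 ++ c1)).Perm (c1 ++ x :: c2) := by
        have h1 : (c1 ++ x :: c2).Perm (x :: (c1 ++ c2)) := List.perm_middle
        have h2 : (c1 ++ c2).Perm (c2 ++ c1) := List.perm_append_comm
        exact ((h1.trans (List.Perm.cons _ h2)).symm)
      have hnd2 : (x :: (c2 ++ c1)).Nodup := hperm.symm.nodup hnd
      rw [hd]
      show (w :: (x :: c2 ++ c1)).Nodup
      rw [List.nodup_cons]
      refine ⟨fun hmem => ?_, by simpa using hnd2⟩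
      have : w ∈ x :: (c2 ++ c1) := by simpa using hmem
      exact hwc (hperm.mem_iff.1 this)
  have hdlen := hmax d hdPL
  have : d.length = (c1 ++ x :: c2).length + 1 := by simp [hd]; omega
  rw [hlen] at this
  omega

/-- Build a walk from a chain list. -/
lemma walk_of_chain (l : List V) : ∀ (v : V), List.Chain G.Adj v l →
    ∃ (w : V) (p : G.Walk v w), p.support = v :: l := by
  induction l with
  | nil => exact fun v _ => ⟨v, Walk.nil, by simp⟩
  | cons b t ih =>
    intro v h
    rw [List.Chain, List.isChain_cons_cons] at h
    obtain ⟨w, p, hp⟩ := ih b h.2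
    exact ⟨w, Walk.cons h.1 p, by rw [Walk.support_cons, hp]⟩

/-- In a walk with no repeated vertices, any edge containing the start vertex
joins it to the second vertex. -/
lemma start_edge : ∀ {v w x : V} (p : G.Walk v w), p.support.Nodup → s(x, v) ∈ p.edges →
    p.support.tail.head? = some x := by
  intro v w x p
  induction p with
  | nil => intro _ hx; simp at hx
  | @cons v' y w' h q ih =>
    intro hnd hx
    rw [Walk.edges_cons, List.mem_cons] at hx
    rcases hx with hx | hx
    · rw [Sym2.eq_iff] at hx
      rcases hx with ⟨rfl, rfl⟩ | ⟨rfl, -⟩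
      · exact absurd rfl h.ne
      · rw [Walk.support_cons, List.tail_cons, q.support_eq_cons]
        rfl
    · exfalso
      have hv : v' ∈ q.support := q.snd_mem_support_of_mem_edges hx
      rw [Walk.support_cons, List.nodup_cons] at hnd
      exact hnd.1 hv

end OreAux

open OreAux in
/-- Ore's edge-count theorem: a graph on `n ≥ 3` vertices with more than
`C(n-1, 2) + 1` edges has a Hamiltonian cycle. -/
theorem ore_edge_count_hamiltonian {V : Type*} [Fintype V] [DecidableEq V]
    (G : SimpleGraph V) (n : ℕ) (hn : n = Fintype.card V) (hn3 : 3 ≤ n)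
    (h : Nat.card G.edgeSet > (n - 1).choose 2 + 1) :
    ∃ (v : V) (c : G.Walk v v), c.IsHamiltonianCycle := by
  classical
  haveI : DecidableRel G.Adj := Classical.decRel _
  have hE : Nat.card G.edgeSet = G.edgeFinset.card := by
    rw [Nat.card_eq_fintype_card, ← Set.toFinset_card]
    rfl
  rw [hE] at h
  have hcard3 : 3 ≤ Fintype.card V := hn ▸ hn3
  have hdeg : ∀ u v : V, u ≠ v → ¬G.Adj u v → Fintype.card V ≤ G.degree u + G.degree v := by
    intro u v huv hadj
    have := ore_condition hn hn3 h huv hadj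
    omega
  haveI : Nonempty V := Fintype.card_pos_iff.1 (by omega)
  obtain ⟨l, hl, hmax⟩ := exists_maximal_PL (G := G) inferInstance
  obtain ⟨c, hc, hch, hnd, hfin, hclen, hadj⟩ := exists_cycle_list hl hmax hdeg hcard3
  have huniv : c.toFinset = Finset.univ :=
    cycle_covers hl hmax hdeg hc hch hnd hfin hclen hadj
  have hculen : c.length = Fintype.card V := by
    rw [← List.toFinset_card_of_nodup hnd, huniv, Finset.card_univ]
  -- build the walk
  have hchain : List.Chain G.Adj (c.head hc) c.tail := by
    have := hch
    rw [← List.cons_head_tail hc] at this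
    exact this
  obtain ⟨w, p, hsup⟩ := walk_of_chain c.tail (c.head hc) hchain
  rw [List.cons_head_tail] at hsup
  have hw : w = c.getLast hc := by
    have h1 : p.support.getLast? = some w := by
      rw [List.getLast?_eq_getLast (by simp), SimpleGraph.Walk.getLast_support]
    have h2 : p.support.getLast? = some (c.getLast hc) := by
      rw [hsup, List.getLast?_eq_getLast hc]
    rw [h1] at h2
    injection h2
  subst hw
  have hpath : p.IsPath := SimpleGraph.Walk.IsPath.mk' (by rw [hsup]; exact hnd)
  have hnotmem : s(c.getLast hc, c.head hc) ∉ p.edges := by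
    intro hmem
    have hthis := start_edge p (by rw [hsup]; exact hnd) hmem
    rw [hsup] at hthis
    set B := c.getLast hc with hB
    set A := c.head hc with hA
    obtain ⟨t, ht⟩ : ∃ t, c = A :: t := ⟨c.tail, (List.cons_head_tail hc).symm⟩
    rw [ht, List.tail_cons] at hthis
    cases t with
    | nil => rw [ht] at hculen; simp at hculen; omega
    | cons z t' =>
      rw [List.head?_cons] at hthis
      injection hthis with hzB
      cases t' with
      | nil => rw [ht] at hculen; simp at hculen; omega
      | cons z2 t2 =>
        have h3 : c.getLast? = some B := by
          rw [hB]
          exact List.getLast?_eq_getLast hc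
        have h2 : c.getLast? = some ((z2 :: t2).getLast (by simp)) := by
          rw [ht, List.getLast?_eq_getLast (by simp),
            List.getLast_cons (by simp : (z :: z2 :: t2) ≠ []),
            List.getLast_cons (by simp : (z2 :: t2) ≠ [])]
        rw [h3] at h2
        injection h2 with h4
        have hwmem : B ∈ z2 :: t2 := by
          rw [h4]
          exact List.getLast_mem _
        rw [ht] at hnd
        simp only [List.nodup_cons] at hnd
        rw [← hzB] at hwmem
        exact hnd.2.1 (by simp [hwmem])
  refine ⟨c.getLast hc, SimpleGraph.Walk.cons (hadj) p, ?_⟩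
  rw [SimpleGraph.Walk.isHamiltonianCycle_iff_isCycle_and_support_count_tail_eq_one]
  constructor
  · rw [SimpleGraph.Walk.cons_isCycle_iff]
    exact ⟨hpath, hnotmem⟩
  · intro a
    rw [SimpleGraph.Walk.support_cons, List.tail_cons, hsup]
    exact List.count_eq_one_of_mem hnd (by rw [← List.mem_toFinset, huniv]; exact Finset.mem_univ a)
end

section
/- If G is a finite simple graph on n vertices that has a unique perfect matching, then G has at most n²/4 edges (Lovász). -/
open SimpleGraph

private def invMatching {V : Type*} (G : SimpleGraph V) (q : V → V)
    (hinv : ∀ v, q (q v) = v) (hadj : ∀ v, G.Adj v (q v)) : G.Subgraph where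
  verts := Set.univ
  Adj x y := q x = y
  adj_sub := by rintro x y rfl; exact hadj x
  edge_vert := fun _ => trivial
  symm := ⟨by rintro x y rfl; exact hinv x⟩

private lemma invMatching_isPM {V : Type*} (G : SimpleGraph V) (q : V → V)
    (hinv : ∀ v, q (q v) = v) (hadj : ∀ v, G.Adj v (q v)) :
    (invMatching G q hinv hadj).IsPerfectMatching := by
  constructor
  · intro v _
    refine ⟨q v, rfl, fun w hw => ?_⟩
    have h : q v = w := hw
    exact h.symm
  · intro v; trivial

private lemma invMatching_adj {V : Type*} (G : SimpleGraph V) (q : V → V)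
    (hinv : ∀ v, q (q v) = v) (hadj : ∀ v, G.Adj v (q v)) (x : V) :
    (invMatching G q hinv hadj).Adj x (q x) := rfl

set_option maxHeartbeats 8000000 in
/-- Lovász: a graph on `n` vertices with a unique perfect matching has at most
`n²/4` edges. -/
theorem lovasz_unique_perfect_matching_edges {V : Type*} [Fintype V] (G : SimpleGraph V)
    (n : ℕ) (hn : n = Fintype.card V)
    (huniq : ∃! M : G.Subgraph, M.IsPerfectMatching) :
    (Nat.card G.edgeSet : ℝ) ≤ (n : ℝ) ^ 2 / 4 := by
  classical
  obtain ⟨M, hM, huq⟩ := huniq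
  have hex : ∀ v : V, ∃ w, M.Adj v w ∧ ∀ y, M.Adj v y → y = w := fun v => hM.1 (hM.2 v)
  choose p hp hup using hex
  have hGadj : ∀ v, G.Adj v (p v) := fun v => M.adj_sub (hp v)
  have hpp : ∀ v, p (p v) = v := fun v => (hup (p v) v (hp v).symm).symm
  have hpne : ∀ v, p v ≠ v := fun v => (hGadj v).ne'
  have hpinj : Function.Injective p := fun x y h => by rw [← hpp x, h, hpp]
  -- no alternating 4-cycle
  have key : ∀ a c, G.Adj a c → p a ≠ c → ¬ G.Adj (p a) (p c) := by
    intro a c hac hpac hG2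
    have hca : c ≠ a := hac.ne'
    have hapc : a ≠ p c := fun h => hpac (by rw [h, hpp])
    have hpca : p c ≠ a := fun h => hapc h.symm
    have hpapc : p a ≠ p c := fun h => hac.ne (hpinj h)
    set q : V → V := fun x =>
      if x = a then c else if x = c then a else
      if x = p a then p c else if x = p c then p a else p x with hqdef
    have hqa : q a = c := by simp [hqdef]
    have hqc : q c = a := by simp [hqdef, hca]
    have hqpa : q (p a) = p c := by simp [hqdef, hpne a, hpac]
    have hqpc : q (p c) = p a := by simp [hqdef, hpca, hpne c, Ne.symm hpapc]
    have hqo : ∀ v, v ≠ a → v ≠ c → v ≠ p a → v ≠ p c → q v = p v := by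
      intro v h1 h2 h3 h4; simp [hqdef, h1, h2, h3, h4]
    have hqinv : ∀ v, q (q v) = v := by
      intro v
      by_cases h1 : v = a
      · subst h1; rw [hqa, hqc]
      by_cases h2 : v = c
      · subst h2; rw [hqc, hqa]
      by_cases h3 : v = p a
      · subst h3; rw [hqpa, hqpc]
      by_cases h4 : v = p c
      · subst h4; rw [hqpc, hqpa]
      rw [hqo v h1 h2 h3 h4]
      have k1 : p v ≠ a := fun h => h3 (by rw [← h, hpp])
      have k2 : p v ≠ c := fun h => h4 (by rw [← h, hpp])
      have k3 : p v ≠ p a := fun h => h1 (hpinj h)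
      have k4 : p v ≠ p c := fun h => h2 (hpinj h)
      rw [hqo (p v) k1 k2 k3 k4, hpp]
    have hqadj : ∀ v, G.Adj v (q v) := by
      intro v
      by_cases h1 : v = a
      · subst h1; rw [hqa]; exact hac
      by_cases h2 : v = c
      · subst h2; rw [hqc]; exact hac.symm
      by_cases h3 : v = p a
      · subst h3; rw [hqpa]; exact hG2
      by_cases h4 : v = p c
      · subst h4; rw [hqpc]; exact hG2.symm
      rw [hqo v h1 h2 h3 h4]; exact hGadj v
    have heq := huq _ (invMatching_isPM G q hqinv hqadj)
    have hMac : M.Adj a c := by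
      rw [← heq, ← hqa]
      exact invMatching_adj G q hqinv hqadj a
    exact hpac (hup a c hMac).symm
  -- counting
  letI : LinearOrder V := LinearOrder.lift' (Fintype.equivFin V) (Fintype.equivFin V).injective
  set r : V → V := fun v => min v (p v) with hrdef
  have hrc : ∀ v, r v = v ∨ r v = p v := fun v => min_choice v (p v)
  have hrp : ∀ v, r (p v) = r v := by
    intro v; simp only [hrdef]; rw [hpp, min_comm]
  have hrr : ∀ v, r (r v) = r v := by
    intro v; rcases hrc v with h | h
    · rw [h]; exact h
    · rw [h, hrp]; exact h
  have hvr : ∀ v, v = r v ∨ v = p (r v) := by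
    intro v; rcases hrc v with h | h
    · exact Or.inl h.symm
    · right; rw [h, hpp]
  have samePair : ∀ x z, r x = r z → x = z ∨ x = p z := by
    intro x z h
    rcases hvr x with hx | hx <;> rcases hvr z with hz | hz
    · left; rw [hx, h, ← hz]
    · have hpz : p z = r z := by
        conv_lhs => rw [hz]
        rw [hpp]
      right; rw [hx, h, ← hpz]
    · right; rw [hx, h, ← hz]
    · left; rw [hx, h, ← hz]
  have hxor : ∀ v, (v = r v) ↔ ¬ (p v = r v) := by
    intro v; rcases hrc v with h | h
    · simp [h, hpne v]
    · simp only [h]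
      simp [Ne.symm (hpne v), hpne v]
  set R : Finset V := Finset.univ.image r with hRdef
  have hrR : ∀ v, r v ∈ R := fun v => Finset.mem_image_of_mem r (Finset.mem_univ v)
  have hminmem : ∀ x y : V, min (r x) (r y) ∈ R := by
    intro x y; rcases min_choice (r x) (r y) with h | h <;> rw [h] <;> exact hrR _
  have hmaxmem : ∀ x y : V, max (r x) (r y) ∈ R := by
    intro x y; rcases max_choice (r x) (r y) with h | h <;> rw [h] <;> exact hrR _
  set k : ℕ := R.card with hkdef
  -- 2k ≤ n
  have h2k : 2 * k ≤ n := by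
    have hdisj : Disjoint R (R.image p) := by
      rw [Finset.disjoint_left]
      intro u hu hu2
      have hru : r u = u := by
        obtain ⟨v, _, rfl⟩ := Finset.mem_image.mp hu; exact hrr v
      obtain ⟨w, hw, hww⟩ := Finset.mem_image.mp hu2
      have hrw : r w = w := by
        obtain ⟨v, _, rfl⟩ := Finset.mem_image.mp hw; exact hrr v
      have huw : u = w := by rw [← hru, ← hww, hrp, hrw]
      exact hpne u (by rw [huw]; exact hww.trans huw)
    have himg : (R.image p).card = k := Finset.card_image_of_injective R hpinj
    have hcard : (R ∪ R.image p).card ≤ Fintype.card V :=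
      le_trans (Finset.card_le_univ _) (le_of_eq Finset.card_univ)
    rw [Finset.card_union_of_disjoint hdisj, himg] at hcard
    omega
  -- the edge encoding
  set f : V → V → V × V := fun x y =>
    if r x = r y then (r x, r x) else
    if ((x = r x) ↔ (y = r y)) then (min (r x) (r y), max (r x) (r y))
    else (max (r x) (r y), min (r x) (r y)) with hfdef
  have hfsymm : ∀ x y, f x y = f y x := by
    intro x y
    simp only [hfdef]
    by_cases h : r x = r y
    · rw [if_pos h, if_pos h.symm, h]
    · have h' : ¬ r y = r x := fun hh => h hh.symm
      rw [if_neg h, if_neg h']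
      by_cases hpar : ((x = r x) ↔ (y = r y))
      · rw [if_pos hpar, if_pos hpar.symm, min_comm (r x) (r y), max_comm (r x) (r y)]
      · have hpar' : ¬((y = r y) ↔ (x = r x)) := fun hh => hpar hh.symm
        rw [if_neg hpar, if_neg hpar', min_comm (r x) (r y), max_comm (r x) (r y)]
  set Φ : Sym2 V → V × V := Sym2.lift ⟨f, hfsymm⟩ with hΦdef
  have hΦ : ∀ x y, Φ s(x, y) = f x y := fun x y => Sym2.lift_mk ⟨f, hfsymm⟩ x y
  have minmax : ∀ a b c d : V, min a b = min c d → max a b = max c d →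
      (a = c ∧ b = d) ∨ (a = d ∧ b = c) := by
    intro a b c d h1 h2
    rcases le_total a b with hab | hab <;> rcases le_total c d with hcd | hcd
    · rw [min_eq_left hab, min_eq_left hcd] at h1
      rw [max_eq_right hab, max_eq_right hcd] at h2
      exact Or.inl ⟨h1, h2⟩
    · rw [min_eq_left hab, min_eq_right hcd] at h1
      rw [max_eq_right hab, max_eq_left hcd] at h2
      exact Or.inr ⟨h1, h2⟩
    · rw [min_eq_right hab, min_eq_left hcd] at h1
      rw [max_eq_left hab, max_eq_right hcd] at h2
      exact Or.inr ⟨h2, h1⟩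
    · rw [min_eq_right hab, min_eq_right hcd] at h1
      rw [max_eq_left hab, max_eq_left hcd] at h2
      exact Or.inl ⟨h2, h1⟩
  have pairEq : ∀ x y, r x = r y → x ≠ y → y = p x := by
    intro x y h hne
    rcases samePair x y h with h' | h'
    · exact absurd h' hne
    · rw [h', hpp]
  -- pointwise injectivity
  have hinjPt : ∀ x y z w : V, G.Adj x y → G.Adj z w → f x y = f z w →
      s(x, y) = s(z, w) := by
    intro x y z w hxyG hzwG hfeq
    by_cases hxy : r x = r y
    · have hyx : y = p x := pairEq x y hxy hxyG.ne
      by_cases hzw : r z = r w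
      · have hwz : w = p z := pairEq z w hzw hzwG.ne
        have h1 : r x = r z := by
          rw [hfdef] at hfeq
          simp only [if_pos hxy, if_pos hzw] at hfeq
          rw [Prod.mk.injEq] at hfeq
          exact hfeq.1
        subst hyx; subst hwz
        rcases samePair x z h1 with h | h
        · rw [h]
        · rw [h, hpp]; exact Sym2.eq_swap
      · exfalso
        have hne2 : min (r z) (r w) ≠ max (r z) (r w) := ne_of_lt (min_lt_max.mpr hzw)
        rw [hfdef] at hfeq
        simp only [if_pos hxy, if_neg hzw] at hfeq
        split_ifs at hfeq with hpar <;> rw [Prod.mk.injEq] at hfeq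
        · exact hne2 (hfeq.1.symm.trans hfeq.2)
        · exact hne2 (hfeq.2.symm.trans hfeq.1)
    · by_cases hzw : r z = r w
      · exfalso
        have hne1 : min (r x) (r y) ≠ max (r x) (r y) := ne_of_lt (min_lt_max.mpr hxy)
        rw [hfdef] at hfeq
        simp only [if_neg hxy, if_pos hzw] at hfeq
        split_ifs at hfeq with hpar <;> rw [Prod.mk.injEq] at hfeq
        · exact hne1 (hfeq.1.trans hfeq.2.symm)
        · exact hne1 (hfeq.2.trans hfeq.1.symm)
      · -- both nondiagonal
        have hne1 : min (r x) (r y) ≠ max (r x) (r y) := ne_of_lt (min_lt_max.mpr hxy)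
        have hne2 : min (r z) (r w) ≠ max (r z) (r w) := ne_of_lt (min_lt_max.mpr hzw)
        rw [hfdef] at hfeq
        simp only [if_neg hxy, if_neg hzw] at hfeq
        have key2 : (min (r x) (r y) = min (r z) (r w) ∧
            max (r x) (r y) = max (r z) (r w)) ∧
            (((x = r x) ↔ (y = r y)) ↔ ((z = r z) ↔ (w = r w))) := by
          by_cases h1 : ((x = r x) ↔ (y = r y)) <;>
            by_cases h2 : ((z = r z) ↔ (w = r w))
          · rw [if_pos h1, if_pos h2, Prod.mk.injEq] at hfeq
            exact ⟨hfeq, iff_of_true h1 h2⟩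
          · rw [if_pos h1, if_neg h2, Prod.mk.injEq] at hfeq
            obtain ⟨ha, hb⟩ := hfeq
            have : max (r z) (r w) ≤ min (r z) (r w) := by
              rw [← ha, ← hb]; exact min_le_max
            exact absurd (le_antisymm min_le_max this) hne2
          · rw [if_neg h1, if_pos h2, Prod.mk.injEq] at hfeq
            obtain ⟨ha, hb⟩ := hfeq
            have : max (r x) (r y) ≤ min (r x) (r y) := by
              rw [ha, hb]; exact min_le_max
            exact absurd (le_antisymm min_le_max this) hne1
          · rw [if_neg h1, if_neg h2, Prod.mk.injEq] at hfeq
            obtain ⟨ha, hb⟩ := hfeq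
            exact ⟨⟨hb, ha⟩, iff_of_false h1 h2⟩
        obtain ⟨⟨hmin, hmax⟩, hPP⟩ := key2
        rcases minmax _ _ _ _ hmin hmax with ⟨h1, h2⟩ | ⟨h1, h2⟩
        · rcases samePair x z h1 with hxz | hxz <;> rcases samePair y w h2 with hyw | hyw
          · rw [hxz, hyw]
          · exfalso
            have e1 : (x = r x) ↔ (z = r z) := by rw [hxz]
            have e2 : (y = r y) ↔ (p w = r w) := by rw [hyw, hrp]
            have := hxor w
            tauto
          · exfalso
            have e1 : (x = r x) ↔ (p z = r z) := by rw [hxz, hrp]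
            have e2 : (y = r y) ↔ (w = r w) := by rw [hyw]
            have := hxor z
            tauto
          · exfalso
            have hpzw : p z ≠ w := fun h => hzw (by rw [← h, hrp])
            exact key z w hzwG hpzw (by rw [← hxz, ← hyw]; exact hxyG)
        · rcases samePair x w h1 with hxw | hxw <;> rcases samePair y z h2 with hyz | hyz
          · rw [hxw, hyz]; exact Sym2.eq_swap
          · exfalso
            have e1 : (x = r x) ↔ (w = r w) := by rw [hxw]
            have e2 : (y = r y) ↔ (p z = r z) := by rw [hyz, hrp]
            have := hxor z
            tauto
          · exfalso
            have e1 : (x = r x) ↔ (p w = r w) := by rw [hxw, hrp]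
            have e2 : (y = r y) ↔ (z = r z) := by rw [hyz]
            have := hxor w
            tauto
          · exfalso
            have hpwz : p w ≠ z := fun h => hzw (by rw [← h, hrp])
            exact key w z hzwG.symm hpwz (by rw [← hxw, ← hyz]; exact hxyG)
  -- assemble the card bound
  have hmapsto : ∀ e ∈ G.edgeFinset, Φ e ∈ R ×ˢ R := by
    intro e he
    induction e using Sym2.ind with
    | _ x y =>
      rw [hΦ]
      have : f x y ∈ R ×ˢ R := by
        simp only [hfdef]
        split_ifs
        · exact Finset.mem_product.mpr ⟨hrR x, hrR x⟩
        · exact Finset.mem_product.mpr ⟨hminmem x y, hmaxmem x y⟩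
        · exact Finset.mem_product.mpr ⟨hmaxmem x y, hminmem x y⟩
      exact this
  have hinj : Set.InjOn Φ (G.edgeFinset : Set (Sym2 V)) := by
    intro e1 he1 e2 he2 heq
    induction e1 using Sym2.ind with
    | _ x y =>
      induction e2 using Sym2.ind with
      | _ z w =>
        have hxyG : G.Adj x y := by simpa using he1
        have hzwG : G.Adj z w := by simpa using he2
        rw [hΦ, hΦ] at heq
        exact hinjPt x y z w hxyG hzwG heq
  have hE : G.edgeFinset.card ≤ (R ×ˢ R).card :=
    Finset.card_le_card_of_injOn Φ hmapsto hinj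
  rw [Finset.card_product] at hE
  have hNat : (Nat.card G.edgeSet) = G.edgeFinset.card := by
    rw [Nat.card_eq_fintype_card, ← Set.toFinset_card]
    congr 1
  -- final arithmetic
  rw [hNat]
  have hc1 : (G.edgeFinset.card : ℝ) ≤ (k : ℝ) * k := by exact_mod_cast hE
  have hc2 : 2 * (k : ℝ) ≤ (n : ℝ) := by exact_mod_cast h2k
  have hk0 : (0 : ℝ) ≤ (k : ℝ) := Nat.cast_nonneg k
  nlinarith [hc1, hc2, hk0]
end

section
/- If G is a connected finite simple graph with a unique perfect matching, then G contains a cut edge that belongs to the perfect matching (Kotzig's theorem). -/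
open SimpleGraph

namespace Kotzig

variable {V : Type*}

/-- Map reachability along a function. -/
lemma reach_map {G₁ G₂ : SimpleGraph V} (φ : V → V)
    (h : ∀ a b, G₁.Adj a b → G₂.Reachable (φ a) (φ b)) {a b : V} (hr : G₁.Reachable a b) :
    G₂.Reachable (φ a) (φ b) := by
  obtain ⟨p⟩ := hr
  induction p with
  | nil => exact Reachable.refl _
  | cons hadj p ih => exact (h _ _ hadj).trans ih

lemma reach_closed {G₁ : SimpleGraph V} (S : Set V)
    (hS : ∀ a b, G₁.Adj a b → a ∉ S → b ∉ S) {a b : V} (hr : G₁.Reachable a b)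
    (ha : a ∉ S) : b ∉ S := by
  obtain ⟨p⟩ := hr
  induction p with
  | nil => exact ha
  | cons hadj p ih => exact ih (hS _ _ hadj ha)

/-- The core "flip an even alternating cycle" lemma: if a graph with a unique perfect matching
contains an even cyclic alternating sequence of distinct vertices, we get a contradiction. -/
lemma flip_cycle {G : SimpleGraph V} {M : G.Subgraph} (hM : M.IsPerfectMatching)
    (huniq : ∀ N : G.Subgraph, N.IsPerfectMatching → N = M)
    (k : ℕ) (hk2 : 2 ≤ k) (hke : k % 2 = 0) (q : ℕ → V)
    (hinj : ∀ a b, a < k → b < k → q a = q b → a = b)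
    (hadj : ∀ a, a % 2 = 0 → a + 1 < k → G.Adj (q a) (q (a + 1)))
    (htype : ∀ a, a < k → (M.Adj (q a) (q (if a + 1 = k then 0 else a + 1)) ↔ a % 2 = 1)) :
    False := by
  classical
  have hMm := Subgraph.isPerfectMatching_iff.mp hM
  -- mate characterization on the cycle
  have hmate : ∀ a, a < k → ∀ z, M.Adj (q a) z →
      (a % 2 = 1 ∧ z = q (if a + 1 = k then 0 else a + 1)) ∨
      (a % 2 = 0 ∧ z = q (if a = 0 then k - 1 else a - 1)) := by
    intro a ha z hz
    rcases Nat.mod_two_eq_zero_or_one a with h0 | h1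
    · right
      refine ⟨h0, ?_⟩
      set p := if a = 0 then k - 1 else a - 1 with hp
      have hpk : p < k := by rw [hp]; split <;> omega
      have hps : (if p + 1 = k then 0 else p + 1) = a := by
        rw [hp]; split
        · split <;> omega
        · split <;> omega
      have hpodd : p % 2 = 1 := by rw [hp]; split <;> omega
      have h3 := (htype p hpk).mpr hpodd
      rw [hps] at h3
      exact (hMm (q a)).unique hz h3.symm
    · left
      exact ⟨h1, (hMm (q a)).unique hz ((htype a ha).mpr h1)⟩
  set E' : Set (Sym2 V) := {e | (e ∈ M.edgeSet ∧ ∀ a, a < k → ¬ (q a ∈ e)) ∨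
      ∃ i, 2 * i + 1 < k ∧ e = s(q (2 * i), q (2 * i + 1))} with hE'
  have hqne : ∀ a b, a < k → b < k → a ≠ b → q a ≠ q b := fun a b ha hb hab h =>
    hab (hinj a b ha hb h)
  have hle : SimpleGraph.fromEdgeSet E' ≤ G := by
    intro x y hxy
    rw [fromEdgeSet_adj] at hxy
    obtain ⟨he, hne⟩ := hxy
    rcases he with ⟨hm, -⟩ | ⟨i, hi, heq⟩
    · exact M.adj_sub (Subgraph.mem_edgeSet.mp hm)
    · have hadj' := hadj (2 * i) (by omega) hi
      rw [Sym2.eq_iff] at heq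
      rcases heq with ⟨rfl, rfl⟩ | ⟨rfl, rfl⟩
      · exact hadj'
      · exact hadj'.symm
  have hpm : ∀ x, ∃! y, (SimpleGraph.fromEdgeSet E').Adj x y := by
    intro x
    by_cases hx : ∃ a, a < k ∧ x = q a
    · obtain ⟨a, ha, rfl⟩ := hx
      rcases Nat.mod_two_eq_zero_or_one a with h0 | h1
      · -- even : partner is q (a+1)
        have ha1 : a + 1 < k := by omega
        refine ⟨q (a + 1), (fromEdgeSet_adj _).mpr ⟨Or.inr ⟨a / 2, by omega,
            by rw [show 2 * (a / 2) = a by omega]⟩, hqne a (a + 1) ha ha1 (by omega)⟩, ?_⟩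
        intro z hz
        rw [fromEdgeSet_adj] at hz
        obtain ⟨hz1, hz2⟩ := hz
        rcases hz1 with ⟨hm, hnotin⟩ | ⟨i, hi, heq⟩
        · exact absurd (Sym2.mem_mk_left _ _) (hnotin a ha)
        · rw [Sym2.eq_iff] at heq
          rcases heq with ⟨h1, h2⟩ | ⟨h1, h2⟩
          · have hai : a = 2 * i := hinj _ _ ha (by omega) h1
            rw [h2]; congr 1; omega
          · have hai : a = 2 * i + 1 := hinj _ _ ha (by omega) h1
            omega
      · -- odd : partner is q (a-1)
        have ha1 : a - 1 < k := by omega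
        refine ⟨q (a - 1), (fromEdgeSet_adj _).mpr ⟨Or.inr ⟨(a - 1) / 2, by omega, by
            rw [show 2 * ((a - 1) / 2) = a - 1 by omega, show a - 1 + 1 = a by omega]
            exact Sym2.eq_swap⟩, hqne a (a - 1) ha ha1 (by omega)⟩, ?_⟩
        intro z hz
        rw [fromEdgeSet_adj] at hz
        obtain ⟨hz1, hz2⟩ := hz
        rcases hz1 with ⟨hm, hnotin⟩ | ⟨i, hi, heq⟩
        · exact absurd (Sym2.mem_mk_left _ _) (hnotin a ha)
        · rw [Sym2.eq_iff] at heq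
          rcases heq with ⟨h1, h2⟩ | ⟨h1, h2⟩
          · have hai : a = 2 * i := hinj _ _ ha (by omega) h1
            omega
          · have hai : a = 2 * i + 1 := hinj _ _ ha (by omega) h1
            rw [h2]; congr 1; omega
    · push_neg at hx
      obtain ⟨y₀, hy₀, hy₀u⟩ := hMm x
      have hy₀img : ∀ a, a < k → y₀ ≠ q a := by
        intro a ha h
        rw [h] at hy₀
        rcases hmate a ha x hy₀.symm with ⟨-, h2⟩ | ⟨-, h2⟩
        · exact hx _ (by split <;> omega) h2
        · exact hx _ (by split <;> omega) h2
      have hnotin : ∀ a, a < k → ¬ (q a ∈ s(x, y₀)) := by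
        intro a ha hmem
        rw [Sym2.mem_iff] at hmem
        rcases hmem with h | h
        · exact hx a ha h.symm
        · exact hy₀img a ha h.symm
      refine ⟨y₀, (fromEdgeSet_adj _).mpr ⟨Or.inl ⟨Subgraph.mem_edgeSet.mpr hy₀, hnotin⟩,
          (M.adj_sub hy₀).ne⟩, ?_⟩
      intro z hz
      rw [fromEdgeSet_adj] at hz
      obtain ⟨hz1, hz2⟩ := hz
      rcases hz1 with ⟨hm, -⟩ | ⟨i, hi, heq⟩
      · exact hy₀u z (Subgraph.mem_edgeSet.mp hm)
      · rw [Sym2.eq_iff] at heq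
        rcases heq with ⟨h1, -⟩ | ⟨h1, -⟩
        · exact absurd h1 (hx _ (by omega))
        · exact absurd h1 (hx _ (by omega))
  have hNpm : (SimpleGraph.toSubgraph (SimpleGraph.fromEdgeSet E') hle).IsPerfectMatching :=
    Subgraph.isPerfectMatching_iff.mpr hpm
  have hNM := huniq _ hNpm
  have h01 : (SimpleGraph.fromEdgeSet E').Adj (q 0) (q 1) :=
    (fromEdgeSet_adj _).mpr ⟨Or.inr ⟨0, by omega, by norm_num⟩,
      hqne 0 1 (by omega) (by omega) (by omega)⟩
  have hM01 : M.Adj (q 0) (q 1) := by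
    rw [← hNM]
    exact h01
  have := (htype 0 (by omega)).mp (by rwa [if_neg (by omega)])
  omega

theorem aux [Fintype V] : ∀ (nb : ℕ) (G : SimpleGraph V), G.edgeSet.ncard ≤ nb →
    ∀ (M : G.Subgraph), M.IsPerfectMatching →
    (∀ N : G.Subgraph, N.IsPerfectMatching → N = M) →
    ∀ w : V, ∃ x y : V, M.Adj x y ∧ G.IsBridge s(x, y) ∧ G.Reachable w x := by
  intro nb
  induction nb with
  | zero =>
      intro G hn M hM huniq w
      obtain ⟨y, hy, -⟩ := Subgraph.isPerfectMatching_iff.mp hM w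
      have hGe : G.edgeSet = ∅ := by
        have h0 : G.edgeSet.ncard = 0 := by omega
        exact (Set.ncard_eq_zero (G.edgeSet.toFinite)).mp h0
      have hmem : s(w, y) ∈ G.edgeSet := G.mem_edgeSet.mpr (M.adj_sub hy)
      simp [hGe] at hmem
  | succ nb IH =>
      intro G hn M hM huniq w
      by_contra hno
      push_neg at hno
      classical
      have key : ∀ x y, M.Adj x y → G.Reachable w x →
          (G \ fromEdgeSet {s(x, y)}).Reachable x y := by
        intro x y hxy hr
        have hnb : ¬ G.IsBridge s(x, y) := by
          intro hb
          exact absurd hr (hno x y hxy hb)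
        rw [isBridge_iff] at hnb
        push_neg at hnb
        exact hnb
      have hMm := Subgraph.isPerfectMatching_iff.mp hM
      set m : V → V := fun v => (hMm v).choose with hmdef
      have hm : ∀ v, M.Adj v (m v) := fun v => (hMm v).choose_spec.1
      have hmu : ∀ v z, M.Adj v z → z = m v := fun v z h => (hMm v).choose_spec.2 z h
      have hminv : ∀ v, m (m v) = v := fun v => (hmu (m v) v (hm v).symm).symm
      have hmne : ∀ v, m v ≠ v := fun v => (M.adj_sub (hm v)).ne'
      have hQ : ∀ v, G.Reachable w v → ∃ u, G.Adj v u ∧ u ≠ m v := by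
        intro v hv
        obtain ⟨p⟩ := key v (m v) (hm v) hv
        have hnil : ¬ p.Nil := Walk.not_nil_of_ne (hmne v).symm
        obtain ⟨u, hadj, q, rfl⟩ := Walk.not_nil_iff.mp hnil
        rw [sdiff_adj] at hadj
        obtain ⟨hadj1, hadj2⟩ := hadj
        refine ⟨u, hadj1, ?_⟩
        intro hum
        apply hadj2
        rw [fromEdgeSet_adj]
        exact ⟨by rw [hum]; rfl, hadj1.ne⟩
      set g : V → V := fun v => if h : ∃ u, G.Adj v u ∧ u ≠ m v then h.choose else v with hgdef
      have hg : ∀ v, G.Reachable w v → G.Adj v (g v) ∧ g v ≠ m v := by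
        intro v hv
        have h := hQ v hv
        simp only [hgdef, dif_pos h]
        exact h.choose_spec
      set c : ℕ → V := fun l => Nat.rec w (fun l ih => if l % 2 = 0 then g ih else m ih) l
        with hcdef
      have hcs : ∀ l, c (l + 1) = if l % 2 = 0 then g (c l) else m (c l) := fun l => rfl
      have creach : ∀ l, G.Reachable w (c l) := by
        intro l
        induction l with
        | zero => exact Reachable.refl w
        | succ l ih =>
            rw [hcs l]
            by_cases h : l % 2 = 0
            · rw [if_pos h]; exact ih.trans ((hg (c l) ih).1.reachable)
            · rw [if_neg h]; exact ih.trans ((M.adj_sub (hm (c l))).reachable)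
      have cadj : ∀ l, G.Adj (c l) (c (l + 1)) := by
        intro l
        rw [hcs l]
        by_cases h : l % 2 = 0
        · rw [if_pos h]; exact (hg (c l) (creach l)).1
        · rw [if_neg h]; exact M.adj_sub (hm (c l))
      have codd : ∀ l, l % 2 = 1 → c (l + 1) = m (c l) := by
        intro l h; rw [hcs l, if_neg (by omega)]
      have ceven : ∀ l, l % 2 = 0 → c (l + 1) = g (c l) := by
        intro l h; rw [hcs l, if_pos h]
      have cgne : ∀ l, l % 2 = 0 → c (l + 1) ≠ m (c l) := by
        intro l h; rw [ceven l h]; exact (hg (c l) (creach l)).2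
      have cM : ∀ l, M.Adj (c l) (c (l + 1)) ↔ l % 2 = 1 := by
        intro l
        constructor
        · intro hA
          by_contra h
          exact cgne l (by omega) (hmu _ _ hA)
        · intro h; rw [codd l h]; exact hm (c l)
      obtain ⟨i1, j1, hij1, hcc1⟩ : ∃ i j : ℕ, i < j ∧ c i = c j := by
        obtain ⟨a, b, hab, h⟩ := Fintype.exists_ne_map_eq_of_card_lt
          (fun i : Fin (Fintype.card V + 1) => c i) (by simp)
        have hab' : (a : ℕ) ≠ (b : ℕ) := fun hh => hab (Fin.ext hh)
        rcases hab'.lt_or_gt with h' | h'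
        · exact ⟨a, b, h', h⟩
        · exact ⟨b, a, h', h.symm⟩
      have hPex : ∃ j, ∃ i, i < j ∧ c i = c j := ⟨j1, i1, hij1, hcc1⟩
      set j₀ := Nat.find hPex with hj₀def
      obtain ⟨i₀, hi₀, hci₀⟩ : ∃ i, i < j₀ ∧ c i = c j₀ := Nat.find_spec hPex
      have hinj : ∀ a b, a < b → b < j₀ → c a ≠ c b := by
        intro a b hab hb h
        exact Nat.find_min hPex hb ⟨a, hab, h⟩
      set n := j₀ - i₀ with hndef
      have hn1 : 1 ≤ n := by omega
      have hcinj : ∀ a b, a < n → b < n → c (i₀ + a) = c (i₀ + b) → a = b := by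
        intro a b ha hb h
        rcases Nat.lt_trichotomy a b with h' | h' | h'
        · exact absurd h (hinj _ _ (by omega) (by omega))
        · exact h'
        · exact absurd h.symm (hinj _ _ (by omega) (by omega))
      have hne1 : n ≠ 1 := by
        intro h
        have hj : j₀ = i₀ + 1 := by omega
        rw [hj] at hci₀
        exact (cadj i₀).ne hci₀
      have hne2 : n ≠ 2 := by
        intro h
        have hj : j₀ = i₀ + 2 := by omega
        rw [hj] at hci₀
        rcases Nat.mod_two_eq_zero_or_one i₀ with h0 | h1
        · have h2 : (i₀ + 1) % 2 = 1 := by omega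
          have h4 := codd (i₀ + 1) h2
          have h3 : m (c i₀) = c (i₀ + 1) := by rw [hci₀, h4, hminv]
          rw [ceven i₀ h0] at h3
          exact (hg (c i₀) (creach i₀)).2 h3.symm
        · have h2 : (i₀ + 1) % 2 = 0 := by omega
          have h3 := codd i₀ h1
          have h4 := ceven (i₀ + 1) h2
          have h5 : g (c (i₀ + 1)) = m (c (i₀ + 1)) := by
            rw [← h4, ← hci₀, h3, hminv]
          exact (hg (c (i₀ + 1)) (creach (i₀ + 1))).2 h5
      have hn3 : 3 ≤ n := by omega
      rcases Nat.mod_two_eq_zero_or_one i₀ with hpi | hpi <;>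
        rcases Nat.mod_two_eq_zero_or_one j₀ with hpj | hpj
      · -- i₀ even, j₀ even : even alternating cycle
        have hkeven : n % 2 = 0 := by omega
        have hadj' : ∀ a, a % 2 = 0 → a + 1 < n → G.Adj (c (i₀ + a)) (c (i₀ + (a + 1))) := by
          intro a _ _
          have h := cadj (i₀ + a)
          rwa [show i₀ + a + 1 = i₀ + (a + 1) by omega] at h
        have htype' : ∀ a, a < n →
            (M.Adj (c (i₀ + a)) (c (i₀ + (if a + 1 = n then 0 else a + 1))) ↔ a % 2 = 1) := by
          intro a ha
          by_cases hak : a + 1 = n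
          · rw [if_pos hak]
            have h3 : c (i₀ + 0) = c (i₀ + a + 1) := by
              rw [show i₀ + a + 1 = j₀ by omega, Nat.add_zero]; exact hci₀
            rw [h3, cM (i₀ + a)]
            omega
          · rw [if_neg hak, show i₀ + (a + 1) = i₀ + a + 1 by omega, cM (i₀ + a)]
            omega
        exact flip_cycle hM huniq n (by omega) hkeven _ hcinj hadj' htype'
      · -- i₀ even, j₀ odd : blossom
        have hnodd : n % 2 = 1 := by omega
        have hvB0 : c (i₀ + 0) = c i₀ := by rw [Nat.add_zero]
        have mateB : ∀ a, 0 < a → a < n →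
            (((i₀ + a) % 2 = 1 ∧ m (c (i₀ + a)) = c (i₀ + a + 1) ∧ a + 1 < n) ∨
             ((i₀ + a) % 2 = 0 ∧ m (c (i₀ + a)) = c (i₀ + a - 1) ∧ 2 ≤ a)) := by
          intro a h0 hA
          rcases Nat.mod_two_eq_zero_or_one (i₀ + a) with h | h
          · right
            refine ⟨h, ?_, by omega⟩
            have h3 := codd (i₀ + a - 1) (by omega)
            rw [show i₀ + a - 1 + 1 = i₀ + a by omega] at h3
            rw [h3, hminv]
          · exact Or.inl ⟨h, (codd (i₀ + a) h).symm, by omega⟩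
        have hv'B : ∀ a, a < n → c (i₀ + a) ≠ m (c i₀) := by
          intro a ha h
          rcases Nat.eq_zero_or_pos a with rfl | h0
          · rw [Nat.add_zero] at h
            exact hmne (c i₀) h.symm
          · have h2 : m (c (i₀ + a)) = c i₀ := by rw [h, hminv]
            rcases mateB a h0 ha with ⟨h3, h4, h5⟩ | ⟨h3, h4, h5⟩
            · rw [h4] at h2
              exact hinj i₀ (i₀ + a + 1) (by omega) (by omega) h2.symm
            · rw [h4] at h2
              exact hinj i₀ (i₀ + a - 1) (by omega) (by omega) h2.symm
        by_cases hsub : ∃ a, 0 < a ∧ a < n ∧ G.Adj (c (i₀ + a)) (m (c i₀))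
        · obtain ⟨a₁, ha₁0, ha₁n, hadj1⟩ := hsub
          rcases Nat.mod_two_eq_zero_or_one a₁ with hae | hao
          · -- a₁ even : cycle  c i₀, c (i₀+1), ..., c (i₀+a₁), m (c i₀)
            have hk2 : 2 ≤ a₁ + 2 := by omega
            have hke : (a₁ + 2) % 2 = 0 := by omega
            have hinj' : ∀ a b, a < a₁ + 2 → b < a₁ + 2 →
                (if a = a₁ + 1 then m (c i₀) else c (i₀ + a)) =
                (if b = a₁ + 1 then m (c i₀) else c (i₀ + b)) → a = b := by
              intro a b ha hb h
              by_cases h1 : a = a₁ + 1 <;> by_cases h2 : b = a₁ + 1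
              · omega
              · rw [if_pos h1, if_neg h2] at h
                exact absurd h.symm (hv'B b (by omega))
              · rw [if_neg h1, if_pos h2] at h
                exact absurd h (hv'B a (by omega))
              · rw [if_neg h1, if_neg h2] at h
                exact hcinj a b (by omega) (by omega) h
            have hadj' : ∀ a, a % 2 = 0 → a + 1 < a₁ + 2 →
                G.Adj (if a = a₁ + 1 then m (c i₀) else c (i₀ + a))
                  (if a + 1 = a₁ + 1 then m (c i₀) else c (i₀ + (a + 1))) := by
              intro a h0 h1
              rw [if_neg (by omega)]
              by_cases h2 : a + 1 = a₁ + 1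
              · rw [if_pos h2, show a = a₁ by omega]
                exact hadj1
              · rw [if_neg h2, show i₀ + (a + 1) = i₀ + a + 1 by omega]
                exact cadj (i₀ + a)
            have htype' : ∀ a, a < a₁ + 2 →
                (M.Adj (if a = a₁ + 1 then m (c i₀) else c (i₀ + a))
                  (if (if a + 1 = a₁ + 2 then 0 else a + 1) = a₁ + 1 then m (c i₀)
                    else c (i₀ + (if a + 1 = a₁ + 2 then 0 else a + 1))) ↔ a % 2 = 1) := by
              intro a ha
              by_cases h1 : a = a₁ + 1
              · rw [if_pos h1, if_pos (show a + 1 = a₁ + 2 by omega),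
                  if_neg (show ¬ (0 : ℕ) = a₁ + 1 by omega), Nat.add_zero]
                constructor
                · intro _; omega
                · intro _; exact (hm (c i₀)).symm
              · rw [if_neg h1, if_neg (show ¬ a + 1 = a₁ + 2 by omega)]
                by_cases h2 : a + 1 = a₁ + 1
                · rw [if_pos h2]
                  constructor
                  · intro hMA
                    exfalso
                    have h4 := hmu _ _ hMA
                    rcases mateB a (by omega) (by omega) with ⟨h5, h6, h7⟩ | ⟨h5, h6, h7⟩
                    · rw [h6] at h4
                      exact hv'B (a + 1) (by omega)
                        (by rw [show i₀ + (a + 1) = i₀ + a + 1 by omega]; exact h4.symm)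
                    · rw [h6] at h4
                      exact hv'B (a - 1) (by omega)
                        (by rw [show i₀ + (a - 1) = i₀ + a - 1 by omega]; exact h4.symm)
                  · intro h5
                    exact absurd h5 (by omega)
                · rw [if_neg h2, show i₀ + (a + 1) = i₀ + a + 1 by omega, cM (i₀ + a)]
                  omega
            exact flip_cycle hM huniq (a₁ + 2) hk2 hke _ hinj' hadj' htype'
          · -- a₁ odd : cycle  m (c i₀), c (i₀+a₁), ..., c (j₀-1), c i₀
            have hk2 : 2 ≤ n - a₁ + 2 := by omega
            have hke : (n - a₁ + 2) % 2 = 0 := by omega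
            have hinj' : ∀ a b, a < n - a₁ + 2 → b < n - a₁ + 2 →
                (if a = 0 then m (c i₀) else if a = n - a₁ + 1 then c i₀
                  else c (i₀ + (a₁ + a - 1))) =
                (if b = 0 then m (c i₀) else if b = n - a₁ + 1 then c i₀
                  else c (i₀ + (a₁ + b - 1))) → a = b := by
              intro a b ha hb h
              by_cases h1 : a = 0 <;> by_cases h2 : b = 0
              · omega
              · rw [if_pos h1, if_neg h2] at h
                by_cases h3 : b = n - a₁ + 1
                · rw [if_pos h3] at h
                  exact absurd (by rw [← hvB0] at h; exact h.symm) (hv'B 0 (by omega))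
                · rw [if_neg h3] at h
                  exact absurd h.symm (hv'B (a₁ + b - 1) (by omega))
              · rw [if_neg h1, if_pos h2] at h
                by_cases h3 : a = n - a₁ + 1
                · rw [if_pos h3] at h
                  exact absurd (by rw [← hvB0] at h; exact h) (hv'B 0 (by omega))
                · rw [if_neg h3] at h
                  exact absurd h (hv'B (a₁ + a - 1) (by omega))
              · rw [if_neg h1, if_neg h2] at h
                by_cases h3 : a = n - a₁ + 1 <;> by_cases h4 : b = n - a₁ + 1
                · omega
                · rw [if_pos h3, if_neg h4] at h
                  have := hcinj 0 (a₁ + b - 1) (by omega) (by omega) (by rw [Nat.add_zero]; exact h)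
                  omega
                · rw [if_neg h3, if_pos h4] at h
                  have := hcinj (a₁ + a - 1) 0 (by omega) (by omega) (by rw [Nat.add_zero]; exact h)
                  omega
                · rw [if_neg h3, if_neg h4] at h
                  have := hcinj (a₁ + a - 1) (a₁ + b - 1) (by omega) (by omega) h
                  omega
            have hadj' : ∀ a, a % 2 = 0 → a + 1 < n - a₁ + 2 →
                G.Adj (if a = 0 then m (c i₀) else if a = n - a₁ + 1 then c i₀
                    else c (i₀ + (a₁ + a - 1)))
                  (if a + 1 = 0 then m (c i₀) else if a + 1 = n - a₁ + 1 then c i₀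
                    else c (i₀ + (a₁ + (a + 1) - 1))) := by
              intro a h0 h1
              rw [if_neg (show ¬ a + 1 = 0 by omega)]
              by_cases h2 : a = 0
              · rw [if_pos h2, if_neg (by omega), show i₀ + (a₁ + (a + 1) - 1) = i₀ + a₁ by omega]
                exact hadj1.symm
              · rw [if_neg h2, if_neg (show ¬ a = n - a₁ + 1 by omega)]
                by_cases h3 : a + 1 = n - a₁ + 1
                · rw [if_pos h3]
                  have h4 := cadj (j₀ - 1)
                  rw [show j₀ - 1 + 1 = j₀ by omega, ← hci₀] at h4
                  rw [show i₀ + (a₁ + a - 1) = j₀ - 1 by omega]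
                  exact h4
                · rw [if_neg h3]
                  have h4 := cadj (i₀ + (a₁ + a - 1))
                  rwa [show i₀ + (a₁ + a - 1) + 1 = i₀ + (a₁ + (a + 1) - 1) by omega] at h4
            have htype' : ∀ a, a < n - a₁ + 2 →
                (M.Adj (if a = 0 then m (c i₀) else if a = n - a₁ + 1 then c i₀
                    else c (i₀ + (a₁ + a - 1)))
                  (if (if a + 1 = n - a₁ + 2 then 0 else a + 1) = 0 then m (c i₀)
                    else if (if a + 1 = n - a₁ + 2 then 0 else a + 1) = n - a₁ + 1 then c i₀
                    else c (i₀ + (a₁ + (if a + 1 = n - a₁ + 2 then 0 else a + 1) - 1))) ↔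
                  a % 2 = 1) := by
              intro a ha
              by_cases h1 : a = n - a₁ + 1
              · rw [if_neg (show ¬ a = 0 by omega), if_pos h1,
                  if_pos (show a + 1 = n - a₁ + 2 by omega),
                  if_pos (show (0 : ℕ) = 0 from rfl)]
                constructor
                · intro _; omega
                · intro _; exact hm (c i₀)
              · rw [if_neg (show ¬ a + 1 = n - a₁ + 2 by omega),
                  if_neg (show ¬ a + 1 = 0 by omega)]
                by_cases h2 : a = 0
                · rw [if_pos h2, if_neg (show ¬ a + 1 = n - a₁ + 1 by omega),
                    show i₀ + (a₁ + (a + 1) - 1) = i₀ + a₁ by omega]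
                  constructor
                  · intro hMA
                    exfalso
                    have h4 : c (i₀ + a₁) = m (m (c i₀)) := hmu _ _ hMA
                    rw [hminv] at h4
                    exact hinj i₀ (i₀ + a₁) (by omega) (by omega) h4.symm
                  · intro h5
                    exact absurd h5 (by omega)
                · rw [if_neg h2, if_neg (show ¬ a = n - a₁ + 1 from h1)]
                  by_cases h3 : a + 1 = n - a₁ + 1
                  · rw [if_pos h3]
                    have h4 := cM (j₀ - 1)
                    rw [show j₀ - 1 + 1 = j₀ by omega, ← hci₀] at h4
                    rw [show i₀ + (a₁ + a - 1) = j₀ - 1 by omega, h4]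
                    omega
                  · rw [if_neg h3]
                    have h4 := cM (i₀ + (a₁ + a - 1))
                    rw [show i₀ + (a₁ + a - 1) + 1 = i₀ + (a₁ + (a + 1) - 1) by omega] at h4
                    rw [h4]
                    omega
            exact flip_cycle hM huniq (n - a₁ + 2) hk2 hke _ hinj' hadj' htype'
        · -- no blossom vertex other than the base is adjacent to the base's mate: contract
          set B : Set V := {x | ∃ a, a < n ∧ x = c (i₀ + a)} with hBdef
          have hvB : c i₀ ∈ B := ⟨0, by omega, by rw [Nat.add_zero]⟩
          have hv'notB : m (c i₀) ∉ B := by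
            rintro ⟨a, ha, h⟩
            exact hv'B a ha h.symm
          have hc1B : c (i₀ + 1) ∈ B := ⟨1, by omega, rfl⟩
          have hc1ne : c (i₀ + 1) ≠ c i₀ := by
            intro h
            have := hcinj 1 0 (by omega) (by omega) (by rw [Nat.add_zero]; exact h)
            omega
          have hmateB : ∀ x, x ∈ B → x ≠ c i₀ → (m x ∈ B ∧ m x ≠ c i₀) := by
            rintro x ⟨a, ha, rfl⟩ hx0
            have ha0 : 0 < a := by
              rcases Nat.eq_zero_or_pos a with rfl | h
              · exact absurd (by rw [Nat.add_zero]) hx0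
              · exact h
            rcases mateB a ha0 ha with ⟨h1, h2, h3⟩ | ⟨h1, h2, h3⟩
            · rw [h2]
              constructor
              · exact ⟨a + 1, h3, by rw [show i₀ + (a + 1) = i₀ + a + 1 by omega]⟩
              · intro h
                have := hcinj (a + 1) 0 (by omega) (by omega)
                  (by rw [Nat.add_zero, show i₀ + (a + 1) = i₀ + a + 1 by omega]; exact h)
                omega
            · rw [h2]
              constructor
              · exact ⟨a - 1, by omega, by rw [show i₀ + (a - 1) = i₀ + a - 1 by omega]⟩
              · intro h
                have := hcinj (a - 1) 0 (by omega) (by omega)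
                  (by rw [Nat.add_zero, show i₀ + (a - 1) = i₀ + a - 1 by omega]; exact h)
                omega
          have hnsub' : ∀ x, x ∈ B → x ≠ c i₀ → ¬ G.Adj x (m (c i₀)) := by
            rintro x ⟨a, ha, rfl⟩ hne hadjx
            have ha0 : 0 < a := by
              rcases Nat.eq_zero_or_pos a with rfl | h
              · exact absurd (by rw [Nat.add_zero]) hne
              · exact h
            exact hsub ⟨a, ha0, ha, hadjx⟩
          set G4 : SimpleGraph V := {
            Adj := fun x y => (G.Adj x y ∧ x ∉ B ∧ y ∉ B) ∨
              (x = c i₀ ∧ y ∉ B ∧ ∃ u ∈ B, G.Adj u y) ∨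
              (y = c i₀ ∧ x ∉ B ∧ ∃ u ∈ B, G.Adj u x) ∨
              (M.Adj x y ∧ (x ∈ B ∧ x ≠ c i₀) ∧ (y ∈ B ∧ y ≠ c i₀)),
            symm := ⟨by
              rintro x y (⟨h1, h2, h3⟩ | ⟨h1, h2, h3⟩ | ⟨h1, h2, h3⟩ | ⟨h1, h2, h3⟩)
              · exact Or.inl ⟨h1.symm, h3, h2⟩
              · exact Or.inr (Or.inr (Or.inl ⟨h1, h2, h3⟩))
              · exact Or.inr (Or.inl ⟨h1, h2, h3⟩)
              · exact Or.inr (Or.inr (Or.inr ⟨h1.symm, h3, h2⟩))⟩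
            loopless := ⟨by
              rintro x (⟨h1, -, -⟩ | ⟨h1, h2, -⟩ | ⟨h1, h2, -⟩ | ⟨h1, -, -⟩)
              · exact h1.ne rfl
              · exact h2 (h1 ▸ hvB)
              · exact h2 (h1 ▸ hvB)
              · exact (M.adj_sub h1).ne rfl⟩ } with hG4def
          have hG4cases : ∀ x y, G4.Adj x y →
              (G.Adj x y ∧ x ∉ B ∧ y ∉ B) ∨
              (x = c i₀ ∧ y ∉ B ∧ ∃ u ∈ B, G.Adj u y) ∨
              (y = c i₀ ∧ x ∉ B ∧ ∃ u ∈ B, G.Adj u x) ∨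
              (M.Adj x y ∧ (x ∈ B ∧ x ≠ c i₀) ∧ (y ∈ B ∧ y ≠ c i₀)) := fun x y h => h
          have hle4 : M.spanningCoe ≤ G4 := by
            intro x y hxy
            rw [Subgraph.spanningCoe_adj] at hxy
            show (G.Adj x y ∧ x ∉ B ∧ y ∉ B) ∨ _
            by_cases hx : x ∈ B
            · by_cases hx0 : x = c i₀
              · subst hx0
                have hym : y = m (c i₀) := hmu _ _ hxy
                subst hym
                exact Or.inr (Or.inl ⟨rfl, hv'notB, ⟨c i₀, hx, M.adj_sub hxy⟩⟩)
              · obtain ⟨hmB, hmne0⟩ := hmateB x hx hx0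
                have hym : y = m x := hmu _ _ hxy
                exact Or.inr (Or.inr (Or.inr ⟨hxy, ⟨hx, hx0⟩, ⟨hym ▸ hmB, hym ▸ hmne0⟩⟩))
            · by_cases hy : y ∈ B
              · by_cases hy0 : y = c i₀
                · subst hy0
                  have hxm : x = m (c i₀) := hmu _ _ hxy.symm
                  exact Or.inr (Or.inr (Or.inl ⟨rfl, hxm ▸ hv'notB, ⟨c i₀, hy, (M.adj_sub hxy).symm⟩⟩))
                · obtain ⟨hmB, -⟩ := hmateB y hy hy0
                  have hxm : x = m y := hmu _ _ hxy.symm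
                  exact absurd (hxm ▸ hmB) hx
              · exact Or.inl ⟨M.adj_sub hxy, hx, hy⟩
          have hM4 : (SimpleGraph.toSubgraph M.spanningCoe hle4).IsPerfectMatching :=
            (Subgraph.IsPerfectMatching.toSubgraph_iff hle4).mpr hM
          set M4 : G4.Subgraph := SimpleGraph.toSubgraph M.spanningCoe hle4 with hM4def
          have hM4adj : ∀ x y, M4.Adj x y ↔ M.Adj x y := fun x y => Iff.rfl
          have hpad : ∀ x z, x ∈ B → x ≠ c i₀ → G4.Adj x z →
              (M.Adj x z ∧ z ∈ B ∧ z ≠ c i₀) := by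
            intro x z hx hx0 hA
            rcases hG4cases x z hA with ⟨-, h2, -⟩ | ⟨h1, -, -⟩ | ⟨-, h2, -⟩ | ⟨h1, -, h3⟩
            · exact absurd hx h2
            · exact absurd h1 hx0
            · exact absurd hx h2
            · exact ⟨h1, h3⟩
          have hvedge : ∀ z, G4.Adj (c i₀) z → (z ∉ B ∧ ∃ u ∈ B, G.Adj u z) := by
            intro z hA
            rcases hG4cases _ _ hA with ⟨-, h2, -⟩ | ⟨-, h2, h3⟩ | ⟨h1, h2, -⟩ | ⟨-, ⟨-, h2⟩, -⟩
            · exact absurd hvB h2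
            · exact ⟨h2, h3⟩
            · exact absurd hvB h2
            · exact absurd rfl h2
          have hBreach : ∀ a : ℕ, G.Reachable (c i₀) (c (i₀ + a)) := by
            intro a
            induction a with
            | zero => rw [Nat.add_zero]
            | succ a ih => exact ih.trans (cadj (i₀ + a)).reachable
          -- uniqueness of the perfect matching of G4
          have huniq4 : ∀ N4 : G4.Subgraph, N4.IsPerfectMatching →
              N4 = M4 := by
            intro N4 hN4
            have hN := Subgraph.isPerfectMatching_iff.mp hN4
            obtain ⟨x₀, hx₀, hx₀u⟩ := hN (c i₀)
            obtain ⟨hx₀B, u₀, hu₀B, hu₀adj⟩ := hvedge x₀ (N4.adj_sub hx₀)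
            have hu₀x₀ne : u₀ ≠ x₀ := fun h => hx₀B (h ▸ hu₀B)
            have hu₀B' : u₀ ∈ B := hu₀B
            obtain ⟨a₀, ha₀n, hu₀eq⟩ := hu₀B
            set wv : ℕ → V := fun d =>
              c (i₀ + (if a₀ + d < n then a₀ + d else a₀ + d - n)) with hwvdef
            have hwv0 : wv 0 = u₀ := by
              simp only [hwvdef]
              rw [show (if a₀ + 0 < n then a₀ + 0 else a₀ + 0 - n) = a₀ from by split <;> omega]
              exact hu₀eq.symm
            have hwvlt : ∀ d, (if a₀ + d < n then a₀ + d else a₀ + d - n) < n ∨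
                (n ≤ a₀ + d - n) := by
              intro d
              split <;> omega
            have hwvlt' : ∀ d, d < n → (if a₀ + d < n then a₀ + d else a₀ + d - n) < n := by
              intro d hd
              split <;> omega
            have hwvB : ∀ d, d < n → wv d ∈ B := fun d hd => ⟨_, hwvlt' d hd, rfl⟩
            have hwvinj : ∀ d e, d < n → e < n → wv d = wv e → d = e := by
              intro d e hd he h
              have h2 := hcinj _ _ (hwvlt' d hd) (hwvlt' e he) h
              by_cases h3 : a₀ + d < n <;> by_cases h4 : a₀ + e < n
              · rw [if_pos h3, if_pos h4] at h2; omega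
              · rw [if_pos h3, if_neg h4] at h2; omega
              · rw [if_neg h3, if_pos h4] at h2; omega
              · rw [if_neg h3, if_neg h4] at h2; omega
            have hwvadj : ∀ d, d + 1 < n → G.Adj (wv d) (wv (d + 1)) := by
              intro d hd
              by_cases h1 : a₀ + d + 1 < n
              · simp only [hwvdef]
                rw [show (if a₀ + d < n then a₀ + d else a₀ + d - n) = a₀ + d
                    from by split <;> omega,
                  show (if a₀ + (d + 1) < n then a₀ + (d + 1) else a₀ + (d + 1) - n) = a₀ + d + 1
                    from by split <;> omega,
                  show i₀ + (a₀ + d + 1) = i₀ + (a₀ + d) + 1 by omega]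
                exact cadj _
              · by_cases h2 : a₀ + d < n
                · simp only [hwvdef]
                  rw [show (if a₀ + d < n then a₀ + d else a₀ + d - n) = n - 1
                      from by split <;> omega,
                    show (if a₀ + (d + 1) < n then a₀ + (d + 1) else a₀ + (d + 1) - n) = 0
                      from by split <;> omega, Nat.add_zero]
                  have h4 := cadj (j₀ - 1)
                  rw [show j₀ - 1 + 1 = j₀ by omega, ← hci₀] at h4
                  rw [show i₀ + (n - 1) = j₀ - 1 by omega]
                  exact h4
                · simp only [hwvdef]
                  rw [show (if a₀ + d < n then a₀ + d else a₀ + d - n) = a₀ + d - n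
                      from by split <;> omega,
                    show (if a₀ + (d + 1) < n then a₀ + (d + 1) else a₀ + (d + 1) - n)
                        = a₀ + d - n + 1 from by split <;> omega,
                    show i₀ + (a₀ + d - n + 1) = i₀ + (a₀ + d - n) + 1 by omega]
                  exact cadj _
            have hcov : ∀ x, x ∈ B → ∃ d, d < n ∧ wv d = x := by
              rintro x ⟨a, ha, rfl⟩
              by_cases h1 : a₀ ≤ a
              · refine ⟨a - a₀, by omega, ?_⟩
                simp only [hwvdef]
                rw [show (if a₀ + (a - a₀) < n then a₀ + (a - a₀) else a₀ + (a - a₀) - n) = a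
                    from by split <;> omega]
              · refine ⟨a + n - a₀, by omega, ?_⟩
                simp only [hwvdef]
                rw [show (if a₀ + (a + n - a₀) < n then a₀ + (a + n - a₀)
                    else a₀ + (a + n - a₀) - n) = a from by split <;> omega]
            -- the replacement perfect matching of G
            set EN : Set (Sym2 V) := {e |
                (∃ p q', e = s(p, q') ∧ N4.Adj p q' ∧ p ∉ B ∧ q' ∉ B) ∨
                e = s(u₀, x₀) ∨
                (∃ i, 2 * i + 2 < n ∧ e = s(wv (2 * i + 1), wv (2 * i + 2)))} with hENdef
            have hleN : SimpleGraph.fromEdgeSet EN ≤ G := by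
              intro x y hxy
              rw [fromEdgeSet_adj] at hxy
              obtain ⟨hE, hne⟩ := hxy
              rcases hE with ⟨p, q', heq, hadjN, hp, hq⟩ | heq | ⟨i2, hi2, heq⟩
              · have hGadj : G.Adj p q' := by
                  rcases hG4cases _ _ (N4.adj_sub hadjN) with ⟨h1, -⟩ | ⟨h1, -, -⟩ |
                    ⟨h1, -, -⟩ | ⟨-, ⟨h1, -⟩, -⟩
                  · exact h1
                  · exact absurd (h1 ▸ hvB) hp
                  · exact absurd (h1 ▸ hvB) hq
                  · exact absurd h1 hp
                rw [Sym2.eq_iff] at heq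
                rcases heq with ⟨rfl, rfl⟩ | ⟨rfl, rfl⟩
                · exact hGadj
                · exact hGadj.symm
              · rw [Sym2.eq_iff] at heq
                rcases heq with ⟨rfl, rfl⟩ | ⟨rfl, rfl⟩
                · exact hu₀adj
                · exact hu₀adj.symm
              · have hGadj := hwvadj (2 * i2 + 1) (by omega)
                rw [Sym2.eq_iff] at heq
                rcases heq with ⟨rfl, rfl⟩ | ⟨rfl, rfl⟩
                · exact hGadj
                · exact hGadj.symm
            have hpmN : ∀ z, ∃! y, (SimpleGraph.fromEdgeSet EN).Adj z y := by
              intro z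
              by_cases hzB : z ∈ B
              · obtain ⟨d, hd, hwd⟩ := hcov z hzB
                by_cases hd0 : d = 0
                · have hzu : z = u₀ := by rw [← hwd, hd0, hwv0]
                  subst hzu
                  refine ⟨x₀, (fromEdgeSet_adj _).mpr ⟨Or.inr (Or.inl rfl), hu₀x₀ne⟩, ?_⟩
                  intro y hy
                  rw [fromEdgeSet_adj] at hy
                  obtain ⟨hE, hne⟩ := hy
                  rcases hE with ⟨p, q', heq, hadjN, hp, hq⟩ | heq | ⟨i2, hi2, heq⟩
                  · rw [Sym2.eq_iff] at heq
                    rcases heq with ⟨h1, h2⟩ | ⟨h1, h2⟩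
                    · exact absurd (h1 ▸ hzB) hp
                    · exact absurd (h1 ▸ hzB) hq
                  · rw [Sym2.eq_iff] at heq
                    rcases heq with ⟨h1, h2⟩ | ⟨h1, h2⟩
                    · exact h2
                    · exact absurd h1 hu₀x₀ne
                  · rw [Sym2.eq_iff] at heq
                    rcases heq with ⟨h1, h2⟩ | ⟨h1, h2⟩
                    · have := hwvinj 0 (2 * i2 + 1) (by omega) (by omega) (by rw [hwv0]; exact h1)
                      omega
                    · have := hwvinj 0 (2 * i2 + 2) (by omega) (by omega) (by rw [hwv0]; exact h1)
                      omega
                · subst hwd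
                  rcases Nat.mod_two_eq_zero_or_one d with hde | hdo
                  · -- d even, partner wv (d-1)
                    have hkey : 2 * ((d - 2) / 2) + 1 = d - 1 := by omega
                    have hkey2 : 2 * ((d - 2) / 2) + 2 = d := by omega
                    refine ⟨wv (d - 1), (fromEdgeSet_adj _).mpr ⟨Or.inr (Or.inr ⟨(d - 2) / 2,
                      by omega, by rw [hkey, hkey2]; exact Sym2.eq_swap⟩),
                      fun h => by have := hwvinj d (d - 1) hd (by omega) h; omega⟩, ?_⟩
                    intro y hy
                    rw [fromEdgeSet_adj] at hy
                    obtain ⟨hE, hne⟩ := hy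
                    rcases hE with ⟨p, q', heq, hadjN, hp, hq⟩ | heq | ⟨i2, hi2, heq⟩
                    · rw [Sym2.eq_iff] at heq
                      rcases heq with ⟨h1, h2⟩ | ⟨h1, h2⟩
                      · exact absurd (h1 ▸ hzB) hp
                      · exact absurd (h1 ▸ hzB) hq
                    · rw [Sym2.eq_iff] at heq
                      rcases heq with ⟨h1, h2⟩ | ⟨h1, h2⟩
                      · have := hwvinj d 0 hd (by omega) (by rw [hwv0]; exact h1)
                        omega
                      · exact absurd (by rw [← h1]; exact hzB) hx₀B
                    · rw [Sym2.eq_iff] at heq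
                      rcases heq with ⟨h1, h2⟩ | ⟨h1, h2⟩
                      · have := hwvinj d (2 * i2 + 1) hd (by omega) h1
                        omega
                      · have h3 := hwvinj d (2 * i2 + 2) hd (by omega) h1
                        rw [h2]
                        congr 1
                        omega
                  · -- d odd, partner wv (d+1)
                    have hdn : d + 1 < n := by omega
                    have hkey : 2 * ((d - 1) / 2) + 1 = d := by omega
                    have hkey2 : 2 * ((d - 1) / 2) + 2 = d + 1 := by omega
                    refine ⟨wv (d + 1), (fromEdgeSet_adj _).mpr ⟨Or.inr (Or.inr ⟨(d - 1) / 2,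
                      by omega, by rw [hkey, hkey2]⟩),
                      fun h => by have := hwvinj d (d + 1) hd (by omega) h; omega⟩, ?_⟩
                    intro y hy
                    rw [fromEdgeSet_adj] at hy
                    obtain ⟨hE, hne⟩ := hy
                    rcases hE with ⟨p, q', heq, hadjN, hp, hq⟩ | heq | ⟨i2, hi2, heq⟩
                    · rw [Sym2.eq_iff] at heq
                      rcases heq with ⟨h1, h2⟩ | ⟨h1, h2⟩
                      · exact absurd (h1 ▸ hzB) hp
                      · exact absurd (h1 ▸ hzB) hq
                    · rw [Sym2.eq_iff] at heq
                      rcases heq with ⟨h1, h2⟩ | ⟨h1, h2⟩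
                      · have := hwvinj d 0 hd (by omega) (by rw [hwv0]; exact h1)
                        omega
                      · exact absurd (by rw [← h1]; exact hzB) hx₀B
                    · rw [Sym2.eq_iff] at heq
                      rcases heq with ⟨h1, h2⟩ | ⟨h1, h2⟩
                      · have h3 := hwvinj d (2 * i2 + 1) hd (by omega) h1
                        rw [h2]
                        congr 1
                        omega
                      · have := hwvinj d (2 * i2 + 2) hd (by omega) h1
                        omega
              · by_cases hzx : z = x₀
                · rw [hzx]
                  obtain ⟨xp, hxp, hxpu⟩ := hN x₀
                  have hxpv : c i₀ = xp := hxpu _ hx₀.symm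
                  refine ⟨u₀, (fromEdgeSet_adj _).mpr ⟨Or.inr (Or.inl Sym2.eq_swap),
                    fun h => hu₀x₀ne h.symm⟩, ?_⟩
                  intro y hy
                  rw [fromEdgeSet_adj] at hy
                  obtain ⟨hE, hne⟩ := hy
                  rcases hE with ⟨p, q', heq, hadjN, hp, hq⟩ | heq | ⟨i2, hi2, heq⟩
                  · rw [Sym2.eq_iff] at heq
                    rcases heq with ⟨h1, h2⟩ | ⟨h1, h2⟩
                    · have h3 : N4.Adj x₀ q' := by rw [h1]; exact hadjN
                      have h4 : q' = xp := hxpu _ h3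
                      exact absurd (by rw [h4, ← hxpv]; exact hvB) hq
                    · have h3 : N4.Adj x₀ p := by rw [h1]; exact hadjN.symm
                      have h4 : p = xp := hxpu _ h3
                      exact absurd (by rw [h4, ← hxpv]; exact hvB) hp
                  · rw [Sym2.eq_iff] at heq
                    rcases heq with ⟨h1, h2⟩ | ⟨h1, h2⟩
                    · exact absurd h1.symm hu₀x₀ne
                    · exact h2
                  · rw [Sym2.eq_iff] at heq
                    rcases heq with ⟨h1, -⟩ | ⟨h1, -⟩
                    · exact absurd (by rw [h1]; exact hwvB _ (by omega)) hx₀B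
                    · exact absurd (by rw [h1]; exact hwvB _ (by omega)) hx₀B
                · obtain ⟨z4, hz4, hz4u⟩ := hN z
                  have hz4B : z4 ∉ B := by
                    rcases hG4cases _ _ (N4.adj_sub hz4) with ⟨-, -, h3⟩ | ⟨h1, -, -⟩ |
                      ⟨h1, -, -⟩ | ⟨-, ⟨h1, -⟩, -⟩
                    · exact h3
                    · exact absurd (by rw [h1]; exact hvB) hzB
                    · exfalso
                      have h2 := hz4.symm
                      rw [h1] at h2
                      exact hzx (hx₀u z h2)
                    · exact absurd h1 hzB
                  refine ⟨z4, (fromEdgeSet_adj _).mpr ⟨Or.inl ⟨z, z4, rfl, hz4, hzB, hz4B⟩,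
                    (N4.adj_sub hz4).ne⟩, ?_⟩
                  intro y hy
                  rw [fromEdgeSet_adj] at hy
                  obtain ⟨hE, hne⟩ := hy
                  rcases hE with ⟨p, q', heq, hadjN, hp, hq⟩ | heq | ⟨i2, hi2, heq⟩
                  · rw [Sym2.eq_iff] at heq
                    rcases heq with ⟨h1, h2⟩ | ⟨h1, h2⟩
                    · exact hz4u y (by rw [h1, h2]; exact hadjN)
                    · exact hz4u y (by rw [h1, h2]; exact hadjN.symm)
                  · rw [Sym2.eq_iff] at heq
                    rcases heq with ⟨h1, -⟩ | ⟨h1, -⟩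
                    · exact absurd (by rw [h1]; exact hu₀B') hzB
                    · exact absurd h1 hzx
                  · rw [Sym2.eq_iff] at heq
                    rcases heq with ⟨h1, -⟩ | ⟨h1, -⟩
                    · exact absurd (by rw [h1]; exact hwvB _ (by omega)) hzB
                    · exact absurd (by rw [h1]; exact hwvB _ (by omega)) hzB
            set NN : G.Subgraph := SimpleGraph.toSubgraph (SimpleGraph.fromEdgeSet EN) hleN
              with hNNdef
            have hNNpm : NN.IsPerfectMatching := Subgraph.isPerfectMatching_iff.mpr hpmN
            have hNM := huniq NN hNNpm
            have hMu₀x₀ : M.Adj u₀ x₀ := by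
              rw [← hNM]
              exact (fromEdgeSet_adj _).mpr ⟨Or.inr (Or.inl rfl), hu₀x₀ne⟩
            have ha₀0 : a₀ = 0 := by
              by_contra h0
              have hne0 : u₀ ≠ c i₀ := by
                intro hh
                apply h0
                have h5 : c (i₀ + a₀) = c (i₀ + 0) := by
                  rw [Nat.add_zero, ← hu₀eq]; exact hh
                exact hcinj a₀ 0 ha₀n (by omega) h5
              obtain ⟨hmB, -⟩ := hmateB u₀ hu₀B' hne0
              have hx₀m : x₀ = m u₀ := hmu _ _ hMu₀x₀
              exact hx₀B (by rw [hx₀m]; exact hmB)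
            have hu₀v : u₀ = c i₀ := by rw [hu₀eq, ha₀0, Nat.add_zero]
            have hx₀v' : x₀ = m (c i₀) := by
              rw [← hu₀v]; exact hmu _ _ hMu₀x₀
            have houtiff : ∀ p q, p ∉ B → q ∉ B → (N4.Adj p q ↔ M.Adj p q) := by
              intro p q hp hq
              constructor
              · intro h
                have h2 : NN.Adj p q := (fromEdgeSet_adj _).mpr
                  ⟨Or.inl ⟨p, q, rfl, h, hp, hq⟩, (N4.adj_sub h).ne⟩
                rw [hNM] at h2
                exact h2
              · intro h
                have h2 : NN.Adj p q := by rw [hNM]; exact h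
                rcases (fromEdgeSet_adj _).mp h2 with ⟨hE, hne⟩
                rcases hE with ⟨p', q', heq, hadjN, hp', hq'⟩ | heq | ⟨i2, hi2, heq⟩
                · rw [Sym2.eq_iff] at heq
                  rcases heq with ⟨h3, h4⟩ | ⟨h3, h4⟩
                  · rw [h3, h4]; exact hadjN
                  · rw [h3, h4]; exact hadjN.symm
                · rw [Sym2.eq_iff] at heq
                  rcases heq with ⟨h3, -⟩ | ⟨-, h3⟩
                  · exact absurd (by rw [h3, hu₀v]; exact hvB) hp
                  · exact absurd (by rw [h3, hu₀v]; exact hvB) hq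
                · rw [Sym2.eq_iff] at heq
                  rcases heq with ⟨h3, -⟩ | ⟨h3, -⟩
                  · exact absurd (by rw [h3]; exact hwvB _ (by omega)) hp
                  · exact absurd (by rw [h3]; exact hwvB _ (by omega)) hp
            have hiff : ∀ p q, N4.Adj p q ↔ M4.Adj p q := by
              intro p q
              rw [hM4adj]
              constructor
              · intro h
                by_cases hp : p ∈ B
                · by_cases hp0 : p = c i₀
                  · subst hp0
                    have h2 : q = x₀ := hx₀u q h
                    rw [h2, hx₀v']
                    exact hm _
                  · exact (hpad p q hp hp0 (N4.adj_sub h)).1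
                · by_cases hq : q ∈ B
                  · by_cases hq0 : q = c i₀
                    · subst hq0
                      have h2 : p = x₀ := hx₀u p h.symm
                      rw [h2, hx₀v']
                      exact (hm _).symm
                    · exact ((hpad q p hq hq0 (N4.adj_sub h.symm)).1).symm
                  · exact (houtiff p q hp hq).mp h
              · intro h
                by_cases hp : p ∈ B
                · by_cases hp0 : p = c i₀
                  · subst hp0
                    have h2 : q = m (c i₀) := hmu _ _ h
                    rw [h2, ← hx₀v']
                    exact hx₀
                  · obtain ⟨qp, hqp, hqpu⟩ := hN p
                    have h3 := hpad p qp hp hp0 (N4.adj_sub hqp)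
                    have h4 : q = m p := hmu _ _ h
                    have h5 : qp = m p := hmu _ _ h3.1
                    rw [h4, ← h5]
                    exact hqp
                · by_cases hq : q ∈ B
                  · by_cases hq0 : q = c i₀
                    · subst hq0
                      have h2 : p = m (c i₀) := hmu _ _ h.symm
                      rw [h2, ← hx₀v']
                      exact hx₀.symm
                    · obtain ⟨hmB, -⟩ := hmateB q hq hq0
                      have h2 : p = m q := hmu _ _ h.symm
                      exact absurd (by rw [h2]; exact hmB) hp
                  · exact (houtiff p q hp hq).mpr h
            apply Subgraph.ext
            · rw [(Subgraph.isSpanning_iff).mp hN4.2, (Subgraph.isSpanning_iff).mp hM4.2]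
            · funext p q
              exact propext (hiff p q)
          -- the contraction has strictly fewer edges
          have hG4e1 : s(c i₀, c (i₀ + 1)) ∉ G4.edgeSet := by
            rw [SimpleGraph.mem_edgeSet]
            intro hA
            rcases hG4cases _ _ hA with ⟨-, h2, -⟩ | ⟨-, h2, -⟩ | ⟨h1, -, -⟩ | ⟨-, ⟨-, h2⟩, -⟩
            · exact h2 hvB
            · exact h2 hc1B
            · exact hc1ne h1
            · exact h2 rfl
          have hG4repl : ∀ e, e ∈ G4.edgeSet → e ∉ G.edgeSet →
              ∃ u x, u ∈ B ∧ x ∉ B ∧ e = s(c i₀, x) ∧ G.Adj u x ∧ u ≠ c i₀ := by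
            intro e
            induction e using Sym2.ind with
            | _ p q =>
              intro he hne
              rw [SimpleGraph.mem_edgeSet] at he
              rw [SimpleGraph.mem_edgeSet] at hne
              rcases hG4cases _ _ he with ⟨h1, -, -⟩ | ⟨h1, h2, u, hu, h3⟩ |
                ⟨h1, h2, u, hu, h3⟩ | ⟨h1, -, -⟩
              · exact absurd h1 hne
              · refine ⟨u, q, hu, h2, by rw [h1], h3, ?_⟩
                intro huv
                apply hne
                rw [huv] at h3
                rw [h1]
                exact h3
              · refine ⟨u, p, hu, h2, by rw [h1]; exact Sym2.eq_swap, h3, ?_⟩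
                intro huv
                apply hne
                rw [huv] at h3
                rw [h1]
                exact h3.symm
              · exact absurd (M.adj_sub h1) hne
          have hfle : G4.edgeSet.ncard < G.edgeSet.ncard := by
            set f : Sym2 V → Sym2 V := fun e =>
              if h : e ∈ G.edgeSet then e
              else if h2 : ∃ u x, u ∈ B ∧ x ∉ B ∧ e = s(c i₀, x) ∧ G.Adj u x ∧ u ≠ c i₀
                then s(h2.choose, h2.choose_spec.choose) else e with hfdef
            have hmapsTo : ∀ e ∈ G4.edgeSet, f e ∈ G.edgeSet \ {s(c i₀, c (i₀ + 1))} := by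
              intro e he
              by_cases h : e ∈ G.edgeSet
              · simp only [hfdef, dif_pos h]
                refine ⟨h, ?_⟩
                intro hc
                rw [Set.mem_singleton_iff] at hc
                exact hG4e1 (hc ▸ he)
              · have h2 := hG4repl e he h
                simp only [hfdef, dif_neg h, dif_pos h2]
                obtain ⟨hu, hx, hse, hadj2, hune⟩ := h2.choose_spec.choose_spec
                refine ⟨G.mem_edgeSet.mpr hadj2, ?_⟩
                intro hc
                rw [Set.mem_singleton_iff, Sym2.eq_iff] at hc
                rcases hc with ⟨hA, hB2⟩ | ⟨hA, hB2⟩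
                · exact hune hA
                · exact hx (by rw [hB2]; exact hvB)
            have hinjOn : Set.InjOn f G4.edgeSet := by
              intro e1 he1 e2 he2 hfe
              by_cases h1 : e1 ∈ G.edgeSet <;> by_cases h2 : e2 ∈ G.edgeSet
              · simp only [hfdef, dif_pos h1, dif_pos h2] at hfe
                exact hfe
              · exfalso
                have h3 := hG4repl e2 he2 h2
                simp only [hfdef, dif_pos h1, dif_neg h2, dif_pos h3] at hfe
                obtain ⟨hu, hx, hse, hadj2, hune⟩ := h3.choose_spec.choose_spec
                rw [hfe] at he1
                rw [SimpleGraph.mem_edgeSet] at he1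
                rcases hG4cases _ _ he1 with ⟨-, h5, -⟩ | ⟨h5, -, -⟩ | ⟨h5, -, -⟩ | ⟨-, -, h5, -⟩
                · exact h5 hu
                · exact hune h5
                · exact hx (by rw [h5]; exact hvB)
                · exact hx h5
              · exfalso
                have h3 := hG4repl e1 he1 h1
                simp only [hfdef, dif_neg h1, dif_pos h3, dif_pos h2] at hfe
                obtain ⟨hu, hx, hse, hadj2, hune⟩ := h3.choose_spec.choose_spec
                rw [← hfe] at he2
                rw [SimpleGraph.mem_edgeSet] at he2
                rcases hG4cases _ _ he2 with ⟨-, h5, -⟩ | ⟨h5, -, -⟩ | ⟨h5, -, -⟩ | ⟨-, -, h5, -⟩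
                · exact h5 hu
                · exact hune h5
                · exact hx (by rw [h5]; exact hvB)
                · exact hx h5
              · have h3 := hG4repl e1 he1 h1
                have h4 := hG4repl e2 he2 h2
                simp only [hfdef, dif_neg h1, dif_neg h2, dif_pos h3, dif_pos h4] at hfe
                obtain ⟨hu3, hx3, hse3, -, -⟩ := h3.choose_spec.choose_spec
                obtain ⟨hu4, hx4, hse4, -, -⟩ := h4.choose_spec.choose_spec
                rw [Sym2.eq_iff] at hfe
                rcases hfe with ⟨hA, hB2⟩ | ⟨hA, hB2⟩
                · rw [hse3, hse4, hB2]
                · exact absurd (by rw [← hA]; exact hu3) hx4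
            calc G4.edgeSet.ncard
                ≤ (G.edgeSet \ {s(c i₀, c (i₀ + 1))}).ncard :=
                  Set.ncard_le_ncard_of_injOn f hmapsTo hinjOn
                    ((G.edgeSet \ {s(c i₀, c (i₀ + 1))}).toFinite)
              _ < G.edgeSet.ncard :=
                  Set.ncard_diff_singleton_lt_of_mem (G.mem_edgeSet.mpr (cadj i₀))
                    (G.edgeSet.toFinite)
          obtain ⟨x, y, hxy4, hbr4, hre4⟩ := IH G4 (by omega) M4 hM4 huniq4 (c i₀)
          have hxy : M.Adj x y := (hM4adj x y).mp hxy4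
          have hxS : x ∉ {z : V | z ∈ B ∧ z ≠ c i₀} := by
            refine reach_closed _ ?_ hre4 (fun h => h.2 rfl)
            intro p q hpq hp hq
            exact hp ⟨(hpad q p hq.1 hq.2 hpq.symm).2.1, (hpad q p hq.1 hq.2 hpq.symm).2.2⟩
          have hcase : (x = c i₀ ∧ y = m (c i₀)) ∨ (x = m (c i₀) ∧ y = c i₀) ∨
              (x ∉ B ∧ y ∉ B) := by
            by_cases hx : x ∈ B
            · have hx0 : x = c i₀ := by
                by_contra h0
                exact hxS ⟨hx, h0⟩
              exact Or.inl ⟨hx0, by rw [← hx0]; exact hmu _ _ hxy⟩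
            · by_cases hy : y ∈ B
              · by_cases hy0 : y = c i₀
                · refine Or.inr (Or.inl ⟨?_, hy0⟩)
                  rw [hy0] at hxy
                  exact hmu _ _ hxy.symm
                · obtain ⟨hmB, -⟩ := hmateB y hy hy0
                  exact absurd (by rw [hmu _ _ hxy.symm]; exact hmB) hx
              · exact Or.inr (Or.inr ⟨hx, hy⟩)
          have hreachx : G.Reachable w x := by
            refine (creach i₀).trans (reach_map id ?_ hre4)
            intro p q hpq
            simp only [id_eq]
            rcases hG4cases _ _ hpq with ⟨h1, -, -⟩ | ⟨h1, -, u, ⟨au, -, hueq⟩, huadj⟩ |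
              ⟨h1, -, u, ⟨au, -, hueq⟩, huadj⟩ | ⟨h1, -, -⟩
            · exact h1.reachable
            · rw [h1]
              exact (hBreach au).trans (by rw [← hueq]; exact huadj.reachable)
            · rw [h1]
              exact ((hBreach au).trans (by rw [← hueq]; exact huadj.reachable)).symm
            · exact (M.adj_sub h1).reachable
          have hdel := key x y hxy hreachx
          have hproj : (G4 \ fromEdgeSet {s(x, y)}).Reachable x y := by
            have hstep : ∀ p q, (G \ fromEdgeSet {s(x, y)}).Adj p q →
                (G4 \ fromEdgeSet {s(x, y)}).Reachable
                  (if p ∈ B then c i₀ else p) (if q ∈ B then c i₀ else q) := by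
              intro p q hpq
              rw [sdiff_adj] at hpq
              obtain ⟨hpq1, hpq2⟩ := hpq
              have hnedge : s(p, q) ≠ s(x, y) := by
                intro hh
                exact hpq2 ((fromEdgeSet_adj _).mpr ⟨by rw [hh]; rfl, hpq1.ne⟩)
              by_cases hp : p ∈ B <;> by_cases hq : q ∈ B
              · rw [if_pos hp, if_pos hq]
              · rw [if_pos hp, if_neg hq]
                have hGadj : G4.Adj (c i₀) q := Or.inr (Or.inl ⟨rfl, hq, ⟨p, hp, hpq1⟩⟩)
                have hnedge2 : s(c i₀, q) ≠ s(x, y) := by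
                  intro hh
                  rcases hcase with ⟨hx1, hy1⟩ | ⟨hx1, hy1⟩ | ⟨hx1, hy1⟩
                  · rw [hx1, hy1, Sym2.eq_iff] at hh
                    rcases hh with ⟨-, h3⟩ | ⟨h2, -⟩
                    · have hp0 : p = c i₀ := by
                        by_contra h0
                        exact hnsub' p hp h0 (by rw [← h3]; exact hpq1)
                      exact hnedge (by rw [hp0, h3, hx1, hy1])
                    · exact hmne (c i₀) h2.symm
                  · rw [hx1, hy1, Sym2.eq_iff] at hh
                    rcases hh with ⟨h2, -⟩ | ⟨-, h3⟩
                    · exact hmne (c i₀) h2.symm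
                    · have hp0 : p = c i₀ := by
                        by_contra h0
                        exact hnsub' p hp h0 (by rw [← h3]; exact hpq1)
                      exact hnedge (by rw [hp0, h3, hx1, hy1]; exact Sym2.eq_swap)
                  · rw [Sym2.eq_iff] at hh
                    rcases hh with ⟨h2, -⟩ | ⟨h2, -⟩
                    · exact hx1 (by rw [← h2]; exact hvB)
                    · exact hy1 (by rw [← h2]; exact hvB)
                refine SimpleGraph.Adj.reachable ?_
                rw [sdiff_adj]
                refine ⟨hGadj, ?_⟩
                intro hf
                exact hnedge2 (Set.mem_singleton_iff.mp ((fromEdgeSet_adj _).mp hf).1)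
              · rw [if_neg hp, if_pos hq]
                have hGadj : G4.Adj p (c i₀) :=
                  Or.inr (Or.inr (Or.inl ⟨rfl, hp, ⟨q, hq, hpq1.symm⟩⟩))
                have hnedge2 : s(p, c i₀) ≠ s(x, y) := by
                  intro hh
                  rcases hcase with ⟨hx1, hy1⟩ | ⟨hx1, hy1⟩ | ⟨hx1, hy1⟩
                  · rw [hx1, hy1, Sym2.eq_iff] at hh
                    rcases hh with ⟨-, h3⟩ | ⟨h2, -⟩
                    · exact hmne (c i₀) h3.symm
                    · have hq0 : q = c i₀ := by
                        by_contra h0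
                        exact hnsub' q hq h0 (by rw [← h2]; exact hpq1.symm)
                      exact hnedge (by rw [hq0, h2, hx1, hy1]; exact Sym2.eq_swap)
                  · rw [hx1, hy1, Sym2.eq_iff] at hh
                    rcases hh with ⟨h2, -⟩ | ⟨-, h3⟩
                    · have hq0 : q = c i₀ := by
                        by_contra h0
                        exact hnsub' q hq h0 (by rw [← h2]; exact hpq1.symm)
                      exact hnedge (by rw [hq0, h2, hx1, hy1])
                    · exact hmne (c i₀) h3.symm
                  · rw [Sym2.eq_iff] at hh
                    rcases hh with ⟨-, h2⟩ | ⟨-, h2⟩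
                    · exact hy1 (by rw [← h2]; exact hvB)
                    · exact hx1 (by rw [← h2]; exact hvB)
                refine SimpleGraph.Adj.reachable ?_
                rw [sdiff_adj]
                refine ⟨hGadj, ?_⟩
                intro hf
                exact hnedge2 (Set.mem_singleton_iff.mp ((fromEdgeSet_adj _).mp hf).1)
              · rw [if_neg hp, if_neg hq]
                refine SimpleGraph.Adj.reachable ?_
                rw [sdiff_adj]
                refine ⟨Or.inl ⟨hpq1, hp, hq⟩, ?_⟩
                intro hf
                exact hnedge (Set.mem_singleton_iff.mp ((fromEdgeSet_adj _).mp hf).1)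
            have h2 : (G4 \ fromEdgeSet {s(x, y)}).Reachable
                (if x ∈ B then c i₀ else x) (if y ∈ B then c i₀ else y) :=
              reach_map (fun z => if z ∈ B then c i₀ else z) hstep hdel
            have hfx : (if x ∈ B then c i₀ else x) = x := by
              rcases hcase with ⟨hx1, -⟩ | ⟨hx1, -⟩ | ⟨hx1, -⟩
              · rw [if_pos (by rw [hx1]; exact hvB), hx1]
              · rw [if_neg (by rw [hx1]; exact hv'notB)]
              · rw [if_neg hx1]
            have hfy : (if y ∈ B then c i₀ else y) = y := by
              rcases hcase with ⟨-, hy1⟩ | ⟨-, hy1⟩ | ⟨-, hy1⟩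
              · rw [if_neg (by rw [hy1]; exact hv'notB)]
              · rw [if_pos (by rw [hy1]; exact hvB), hy1]
              · rw [if_neg hy1]
            rwa [hfx, hfy] at h2
          rw [isBridge_iff] at hbr4
          exact hbr4 hproj
      · -- i₀ odd, j₀ even : impossible
        exfalso
        have hj1 : (j₀ - 1) % 2 = 1 := by omega
        have h3 := codd i₀ hpi
        have h4 := codd (j₀ - 1) hj1
        rw [show j₀ - 1 + 1 = j₀ by omega] at h4
        have h5 : c (j₀ - 1) = m (c j₀) := by rw [h4, hminv]
        have h6 : c (j₀ - 1) = c (i₀ + 1) := by rw [h5, ← hci₀, ← h3]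
        have h7 : i₀ + 1 < j₀ - 1 := by omega
        exact hinj _ _ h7 (by omega) h6.symm
      · -- i₀ odd, j₀ odd : even alternating cycle (shifted)
        have hkeven : n % 2 = 0 := by omega
        have hinj' : ∀ a b, a < n → b < n →
            (if a = n - 1 then c i₀ else c (i₀ + 1 + a)) =
            (if b = n - 1 then c i₀ else c (i₀ + 1 + b)) → a = b := by
          intro a b ha hb h
          by_cases h1 : a = n - 1 <;> by_cases h2 : b = n - 1
          · omega
          · rw [if_pos h1, if_neg h2] at h
            exact absurd h (hinj i₀ (i₀ + 1 + b) (by omega) (by omega))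
          · rw [if_neg h1, if_pos h2] at h
            exact absurd h.symm (hinj i₀ (i₀ + 1 + a) (by omega) (by omega))
          · rw [if_neg h1, if_neg h2] at h
            have h4 := hcinj (1 + a) (1 + b) (by omega) (by omega)
              (by rw [← Nat.add_assoc, ← Nat.add_assoc]; exact h)
            omega
        have hadj' : ∀ a, a % 2 = 0 → a + 1 < n →
            G.Adj (if a = n - 1 then c i₀ else c (i₀ + 1 + a))
              (if a + 1 = n - 1 then c i₀ else c (i₀ + 1 + (a + 1))) := by
          intro a h0 h1
          rw [if_neg (show ¬ a = n - 1 by omega)]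
          by_cases h2 : a + 1 = n - 1
          · rw [if_pos h2]
            have h3 := cadj (j₀ - 1)
            rw [show j₀ - 1 + 1 = j₀ by omega, ← hci₀] at h3
            rw [show i₀ + 1 + a = j₀ - 1 by omega]
            exact h3
          · rw [if_neg h2]
            have h3 := cadj (i₀ + 1 + a)
            rwa [show i₀ + 1 + a + 1 = i₀ + 1 + (a + 1) by omega] at h3
        have htype' : ∀ a, a < n →
            (M.Adj (if a = n - 1 then c i₀ else c (i₀ + 1 + a))
              (if (if a + 1 = n then 0 else a + 1) = n - 1 then c i₀
                else c (i₀ + 1 + (if a + 1 = n then 0 else a + 1))) ↔ a % 2 = 1) := by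
          intro a ha
          by_cases h1 : a = n - 1
          · rw [if_pos h1, if_pos (show a + 1 = n by omega),
              if_neg (show ¬ (0 : ℕ) = n - 1 by omega), Nat.add_zero, cM i₀]
            omega
          · rw [if_neg h1, if_neg (show ¬ a + 1 = n by omega)]
            by_cases h2 : a + 1 = n - 1
            · rw [if_pos h2]
              have h4 := cM (j₀ - 1)
              rw [show j₀ - 1 + 1 = j₀ by omega, ← hci₀] at h4
              rw [show i₀ + 1 + a = j₀ - 1 by omega, h4]
              omega
            · rw [if_neg h2, show i₀ + 1 + (a + 1) = i₀ + 1 + a + 1 by omega, cM (i₀ + 1 + a)]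
              omega
        exact flip_cycle hM huniq n (by omega) hkeven _ hinj' hadj' htype'

end Kotzig

open SimpleGraph

/-- Kotzig's theorem: a connected graph with a unique perfect matching `M` has a cut
edge belonging to `M`. -/
theorem kotzig_unique_perfect_matching_bridge {V : Type*} [Fintype V]
    (G : SimpleGraph V) (hconn : G.Connected) (M : G.Subgraph)
    (hM : M.IsPerfectMatching) (huniq : ∀ M' : G.Subgraph, M'.IsPerfectMatching → M' = M) :
    ∃ e ∈ M.edgeSet, G.IsBridge e := by
  obtain ⟨w⟩ := hconn.nonempty
  obtain ⟨x, y, hxy, hbr, -⟩ := Kotzig.aux G.edgeSet.ncard G le_rfl M hM huniq w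
  exact ⟨s(x, y), Subgraph.mem_edgeSet.mpr hxy, hbr⟩
end

section
/- Let G be a finite simple graph on n vertices with m edges and minimum degree δ ≥ 1. Then the adjacency spectral radius satisfies ρ(G) ≤ (δ−1)/2 + sqrt(2m − nδ + (δ+1)²/4) (Hong–Shu–Fang / Nikiforov bound). -/
open SimpleGraph

open Finset Matrix Pointwise

/-- The adjacency spectral radius: the largest real eigenvalue of the adjacency matrix. -/
noncomputable def specRad {V : Type*} [Fintype V] [DecidableEq V]
    (G : SimpleGraph V) [DecidableRel G.Adj] : ℝ :=
  sSup (spectrum ℝ (G.adjMatrix ℝ))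

/-- Hong–Shu–Fang / Nikiforov bound:
`ρ(G) ≤ (δ-1)/2 + sqrt(2m - nδ + (δ+1)²/4)`. -/
theorem hong_shu_fang_nikiforov {V : Type*} [Fintype V] [DecidableEq V]
    (G : SimpleGraph V) [DecidableRel G.Adj]
    (n m δ : ℕ) (hn : n = Fintype.card V) (hm : m = Nat.card G.edgeSet)
    (hδ : δ = G.minDegree) (hδ1 : 1 ≤ δ) :
    specRad G ≤ ((δ : ℝ) - 1) / 2 +
      Real.sqrt (2 * (m : ℝ) - (n : ℝ) * (δ : ℝ) + ((δ : ℝ) + 1) ^ 2 / 4) := by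
  have hne : Nonempty V := by
    rcases isEmpty_or_nonempty V with h | h
    · exfalso
      rw [hδ, SimpleGraph.minDegree] at hδ1
      simp [Finset.univ_eq_empty] at hδ1
    · exact h
  set A : Matrix V V ℝ := G.adjMatrix ℝ with hAdef
  have hA : A.IsHermitian := by
    ext i j
    simp only [hAdef, Matrix.conjTranspose_apply, SimpleGraph.adjMatrix_apply]
    by_cases h : G.Adj i j
    · simp [h, h.symm]
    · simp [h, show ¬ G.Adj j i from fun h' => h h'.symm]
  set μ : ℝ := specRad G with hμdef
  have hspec : spectrum ℝ A = Set.range hA.eigenvalues := hA.spectrum_real_eq_range_eigenvalues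
  have hfin : (spectrum ℝ A).Finite := by rw [hspec]; exact Set.finite_range _
  have hnonem : (spectrum ℝ A).Nonempty := by
    rw [hspec]; exact Set.range_nonempty _
  have hμmem : μ ∈ spectrum ℝ A := hnonem.csSup_mem hfin
  have hle : ∀ t ∈ spectrum ℝ A, t ≤ μ := fun t ht => le_csSup hfin.bddAbove ht
  obtain ⟨i0, hi0⟩ : ∃ i, hA.eigenvalues i = μ := by
    rw [hspec] at hμmem; exact hμmem
  set y : V → ℝ := ⇑(hA.eigenvectorBasis i0) with hydef
  have hy : A *ᵥ y = μ • y := by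
    rw [← hi0]; exact hA.mulVec_eigenvectorBasis i0
  have hy0 : y ≠ 0 := by
    intro h
    exact hA.eigenvectorBasis.orthonormal.ne_zero i0 (by ext v; exact congrFun h v)
  -- positive semidefiniteness of μ•1 - A
  set M : Matrix V V ℝ := μ • (1 : Matrix V V ℝ) - A with hMdef
  have hM : M.IsHermitian := by
    rw [Matrix.IsHermitian, hMdef, Matrix.conjTranspose_sub, Matrix.conjTranspose_smul,
      Matrix.conjTranspose_one, hA.eq, star_trivial]
  have hMspec : spectrum ℝ M = ({μ} : Set ℝ) - spectrum ℝ A := by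
    rw [hMdef, ← Algebra.algebraMap_eq_smul_one]
    exact (spectrum.singleton_sub_eq A μ).symm
  have hMeig : ∀ i, 0 ≤ hM.eigenvalues i := by
    intro i
    have h1 := hM.eigenvalues_mem_spectrum_real i
    rw [hMspec] at h1
    obtain ⟨a, ha, b, hb, hab⟩ := h1
    rw [Set.mem_singleton_iff] at ha
    subst ha
    have hbμ := hle b hb
    simp only at hab
    linarith [hab]
  have psd : M.PosSemidef := hM.posSemidef_iff_eigenvalues_nonneg.mpr hMeig
  have quad : ∀ w : V → ℝ, 0 ≤ w ⬝ᵥ (M *ᵥ w) := by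
    intro w
    have := psd.re_dotProduct_nonneg w
    simpa using this
  -- Perron vector
  set x : V → ℝ := fun v => |y v| with hxdef
  have hxnn : ∀ v, 0 ≤ x v := fun v => abs_nonneg _
  have hdot1 : x ⬝ᵥ x = y ⬝ᵥ y := by
    simp only [dotProduct, hxdef]
    exact Finset.sum_congr rfl fun v _ => abs_mul_abs_self _
  have hAnn : ∀ v w, 0 ≤ A v w := by
    intro v w; simp only [hAdef, SimpleGraph.adjMatrix_apply]; positivity
  have hdot2 : y ⬝ᵥ (A *ᵥ y) ≤ x ⬝ᵥ (A *ᵥ x) := by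
    simp only [dotProduct, Matrix.mulVec, Finset.mul_sum]
    refine Finset.sum_le_sum fun v _ => Finset.sum_le_sum fun w _ => ?_
    have h1 : y v * (A v w * y w) = A v w * (y v * y w) := by ring
    have h2 : x v * (A v w * x w) = A v w * (|y v| * |y w|) := by
      simp only [hxdef]; ring
    rw [h1, h2, ← abs_mul]
    exact mul_le_mul_of_nonneg_left (le_abs_self _) (hAnn v w)
  have hyAy : y ⬝ᵥ (A *ᵥ y) = μ * (y ⬝ᵥ y) := by
    rw [hy]
    simp [dotProduct_smul, smul_eq_mul]
  have hMx0 : M *ᵥ x = 0 := by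
    have hMx : ∀ w : V → ℝ, w ⬝ᵥ (M *ᵥ w) = μ * (w ⬝ᵥ w) - w ⬝ᵥ (A *ᵥ w) := by
      intro w
      rw [hMdef, Matrix.sub_mulVec, Matrix.smul_mulVec, Matrix.one_mulVec,
        dotProduct_sub, dotProduct_smul]
      simp [smul_eq_mul]
    have h0 : x ⬝ᵥ (M *ᵥ x) ≤ 0 := by
      rw [hMx x, hdot1]
      linarith [hdot2, hyAy]
    have hz : x ⬝ᵥ (M *ᵥ x) = 0 := le_antisymm h0 (quad x)
    exact (psd.dotProduct_mulVec_zero_iff x).mp (by simpa using hz)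
  have hxA : A *ᵥ x = μ • x := by
    have h1 : M *ᵥ x = μ • x - A *ᵥ x := by
      rw [hMdef, Matrix.sub_mulVec, Matrix.smul_mulVec, Matrix.one_mulVec]
    rw [h1] at hMx0
    linear_combination (norm := module) -hMx0
  -- max vertex
  obtain ⟨u, -, hu⟩ := Finset.exists_max_image Finset.univ x ⟨Classical.arbitrary V, Finset.mem_univ _⟩
  have hu' : ∀ v, x v ≤ x u := fun v => hu v (Finset.mem_univ v)
  have hxu : 0 < x u := by
    rcases lt_or_eq_of_le (hxnn u) with h | h
    · exact h
    · exfalso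
      apply hy0
      funext v
      have h1 : x v ≤ 0 := h ▸ hu' v
      have := le_antisymm h1 (hxnn v)
      simpa [hxdef, abs_eq_zero] using this
  set z : V → ℝ := (x u)⁻¹ • x with hzdef
  have hzA : A *ᵥ z = μ • z := by
    rw [hzdef, Matrix.mulVec_smul, hxA, smul_comm]
  have hzu : z u = 1 := by
    simp only [hzdef, Pi.smul_apply, smul_eq_mul]
    field_simp
  have hznn : ∀ v, 0 ≤ z v := fun v => by
    simp only [hzdef, Pi.smul_apply, smul_eq_mul]
    positivity
  have hz1 : ∀ v, z v ≤ 1 := by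
    intro v
    simp only [hzdef, Pi.smul_apply, smul_eq_mul]
    rw [inv_mul_le_iff₀ hxu, mul_one]
    exact hu' v
  have hzE : ∀ v, ∑ w ∈ G.neighborFinset v, z w = μ * z v := by
    intro v
    have h := congrFun hzA v
    rw [hAdef] at h
    simpa [SimpleGraph.adjMatrix_mulVec_apply, Pi.smul_apply, smul_eq_mul] using h
  -- numeric setup
  set d : V → ℝ := fun v => (G.degree v : ℝ) with hddef
  set σ : ℝ := ∑ v, z v with hσdef
  have hdδ : ∀ v, (δ : ℝ) ≤ d v := by
    intro v
    simp only [hddef]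
    exact_mod_cast hδ ▸ G.minDegree_le_degree v
  have hcard : (Finset.univ : Finset V).card = n := by rw [hn]; rfl
  have h2m : ∑ v, d v = 2 * (m : ℝ) := by
    have h1 : ∑ v, G.degree v = 2 * G.edgeFinset.card := G.sum_degrees_eq_twice_card_edges
    have h2 : m = G.edgeFinset.card := by
      rw [hm]
      simp [Nat.card_eq_fintype_card, Set.toFinset_card]
      congr 1; ext e; simp
    rw [h2]
    simp only [hddef]
    exact_mod_cast congrArg (fun k : ℕ => (k : ℝ)) h1
  have hcol : ∀ w, (∑ v, if G.Adj v w then (1 : ℝ) else 0) = d w := by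
    intro w
    rw [Finset.sum_boole]
    have h1 : (Finset.univ.filter fun v => G.Adj v w) = G.neighborFinset w := by
      ext v
      simp [SimpleGraph.adj_comm]
    rw [h1]
    simp [hddef, SimpleGraph.neighborFinset, SimpleGraph.degree]
  -- Identity I
  have hI : ∑ v, d v * z v = μ * σ := by
    have h1 : μ * σ = ∑ v, ∑ w, (if G.Adj v w then z w else 0) := by
      rw [hσdef, Finset.mul_sum]
      refine Finset.sum_congr rfl fun v _ => ?_
      rw [← hzE v]
      rw [SimpleGraph.neighborFinset_eq_filter, Finset.sum_filter]
    rw [h1, Finset.sum_comm]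
    refine (Finset.sum_congr rfl fun w _ => ?_).symm
    rw [← hcol w, Finset.sum_mul]
    refine Finset.sum_congr rfl fun v _ => ?_
    split <;> simp
  -- Inequality II
  have hII : ∑ v, d v * z v ≤ 2 * (m : ℝ) - (δ : ℝ) * ((n : ℝ) - σ) := by
    have h1 : ∀ v ∈ Finset.univ, d v * z v ≤ d v - (δ : ℝ) * (1 - z v) := by
      intro v _
      nlinarith [hdδ v, hz1 v, hznn v]
    calc ∑ v, d v * z v ≤ ∑ v, (d v - (δ : ℝ) * (1 - z v)) := Finset.sum_le_sum h1
      _ = ∑ v, d v - (δ : ℝ) * ((n : ℝ) - σ) := by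
          have hsum1 : ∑ _v : V, (1 : ℝ) = (n : ℝ) := by
            rw [Finset.sum_const, hcard, nsmul_eq_mul, mul_one]
          rw [Finset.sum_sub_distrib, ← Finset.mul_sum, Finset.sum_sub_distrib, hsum1, hσdef]
      _ = 2 * (m : ℝ) - (δ : ℝ) * ((n : ℝ) - σ) := by rw [h2m]
  -- III : 1 + μ ≤ σ
  have hμnn : 0 ≤ μ := by
    have := hzE u
    rw [hzu, mul_one] at this
    rw [← this]
    exact Finset.sum_nonneg fun w _ => hznn w
  have hIII : 1 + μ ≤ σ := by
    have h1 : ∑ v ∈ insert u (G.neighborFinset u), z v ≤ σ := by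
      rw [hσdef]
      exact Finset.sum_le_sum_of_subset_of_nonneg (Finset.subset_univ _)
        (fun v _ _ => hznn v)
    rw [Finset.sum_insert (G.notMem_neighborFinset_self u), hzE u, hzu, mul_one] at h1
    linarith
  have hσpos : 0 < σ := by linarith
  have hμδ : (δ : ℝ) ≤ μ := by
    have h1 : (δ : ℝ) * σ ≤ ∑ v, d v * z v := by
      rw [Finset.mul_sum]
      exact Finset.sum_le_sum fun v _ => mul_le_mul_of_nonneg_right (hdδ v) (hznn v)
    rw [hI] at h1
    exact le_of_mul_le_mul_right (by linarith) hσpos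
  -- key inequality
  have hkey : (μ - (δ : ℝ)) * (1 + μ) ≤ 2 * (m : ℝ) - (δ : ℝ) * (n : ℝ) := by
    have h1 : (μ - (δ : ℝ)) * σ ≤ 2 * (m : ℝ) - (δ : ℝ) * (n : ℝ) := by
      have := hI ▸ hII
      nlinarith
    have h2 : (μ - (δ : ℝ)) * (1 + μ) ≤ (μ - (δ : ℝ)) * σ :=
      mul_le_mul_of_nonneg_left hIII (by linarith)
    linarith
  -- final algebra
  have hδ1' : (1 : ℝ) ≤ (δ : ℝ) := by exact_mod_cast hδ1
  have hsq : (μ - ((δ : ℝ) - 1) / 2) ^ 2 ≤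
      2 * (m : ℝ) - (n : ℝ) * (δ : ℝ) + ((δ : ℝ) + 1) ^ 2 / 4 := by
    nlinarith [hkey]
  have h1 : 0 ≤ μ - ((δ : ℝ) - 1) / 2 := by linarith
  have h2 : μ - ((δ : ℝ) - 1) / 2 ≤
      Real.sqrt (2 * (m : ℝ) - (n : ℝ) * (δ : ℝ) + ((δ : ℝ) + 1) ^ 2 / 4) := by
    rw [← Real.sqrt_sq h1]
    exact Real.sqrt_le_sqrt hsq
  linarith
end
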